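/- arXiv:1110.5036 — 11 statements merged into one kernel-verified Lean document; each statement's English description precedes it below -/
import Mathlib

section
/- Let H be a complex Hilbert space and let A be an invertible bounded linear operator on H. If w(A) ≤ 1 and w(A⁻¹) ≤ 1, then A is unitary. -/
open scoped InnerProductSpace

namespace StampfliAux

open Finset Complex

/-- The root-of-unity phase `exp(2πi m/n)`. -/
noncomputable def E (n : ℕ) (m : ℤ) : ℂ :=
  Complex.exp (((2 * Real.pi * (m : ℝ) / (n : ℝ)) : ℝ) * Complex.I)

lemma E_mul_E (n : ℕ) (a b : ℤ) : E n a * E n b = E n (a + b) := by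
  rw [E, E, E, ← Complex.exp_add]
  congr 1
  push_cast
  ring

lemma E_conj (n : ℕ) (m : ℤ) : (starRingEnd ℂ) (E n m) = E n (-m) := by
  rw [E, E, ← Complex.exp_conj]
  congr 1
  simp only [map_mul, Complex.conj_ofReal, Complex.conj_I]
  push_cast
  ring

lemma E_norm (n : ℕ) (m : ℤ) : ‖E n m‖ = 1 := by
  rw [E, Complex.norm_exp_ofReal_mul_I]

lemma E_pow (n : ℕ) (m : ℤ) (i : ℕ) : (E n m) ^ i = E n (m * i) := by
  rw [E, E, ← Complex.exp_nat_mul]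
  congr 1
  push_cast
  ring

lemma E_zero (n : ℕ) : E n 0 = 1 := by
  simp [E]

lemma orth (n : ℕ) (m : ℤ) (hm : m ≠ 0) (h1 : -(n : ℤ) < m) (h2 : m < (n : ℤ)) :
    ∑ i ∈ Finset.range n, (E n m) ^ i = 0 := by
  have hn : 0 < n := by omega
  have hnR : ((n : ℝ)) ≠ 0 := by positivity
  have hne : E n m ≠ 1 := by
    rw [E]
    intro hcontra
    obtain ⟨k, hk⟩ := Complex.exp_eq_one_iff.mp hcontra
    have hk' : ((2 * Real.pi * (m : ℝ) / (n : ℝ) : ℝ) : ℂ) * Complex.I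
        = (((k : ℝ) * (2 * Real.pi) : ℝ) : ℂ) * Complex.I := by
      rw [hk]; push_cast; ring
    have hre : (2 * Real.pi * (m : ℝ) / (n : ℝ)) = (k : ℝ) * (2 * Real.pi) := by
      have := mul_right_cancel₀ Complex.I_ne_zero hk'
      exact_mod_cast this
    have hmkn : (m : ℝ) = (k : ℝ) * (n : ℝ) := by
      have h2π : (2 * Real.pi) ≠ 0 := by positivity
      apply mul_left_cancel₀ h2π
      field_simp [hnR] at hre
      linear_combination (2 * Real.pi) * hre
    have hmkn' : m = k * n := by exact_mod_cast hmkn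
    rcases lt_trichotomy k 0 with hk0 | hk0 | hk0
    · have hkn : k * (n : ℤ) ≤ -1 * (n : ℤ) :=
        mul_le_mul_of_nonneg_right (by omega : k ≤ -1) (by omega : (0:ℤ) ≤ (n:ℤ))
      omega
    · rw [hk0, zero_mul] at hmkn'; exact hm hmkn'
    · have hkn : 1 * (n : ℤ) ≤ k * (n : ℤ) :=
        mul_le_mul_of_nonneg_right (by omega : 1 ≤ k) (by omega : (0:ℤ) ≤ (n:ℤ))
      omega
  rw [geom_sum_eq hne]
  have hEn : (E n m) ^ n = 1 := by
    rw [E_pow, E]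
    have hnC : ((n : ℕ) : ℂ) ≠ 0 := Nat.cast_ne_zero.mpr (by omega)
    have harg : (((2 * Real.pi * (((m * (n:ℤ) : ℤ)) : ℝ) / (n : ℝ)) : ℝ) : ℂ) * Complex.I
        = (m : ℤ) * (2 * Real.pi * Complex.I) := by
      push_cast
      field_simp
    rw [harg, Complex.exp_int_mul_two_pi_mul_I]
  rw [hEn]
  simp

section Hilbert

variable {H : Type*} [NormedAddCommGroup H] [InnerProductSpace ℂ H]

/-- Scale-invariant form of the numerical-radius hypothesis. -/
lemma nr_bound (T : H →L[ℂ] H) (hw : ∀ h : H, ‖h‖ = 1 → ‖(⟪h, T h⟫_ℂ)‖ ≤ 1) (h : H) :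
    ‖(⟪h, T h⟫_ℂ)‖ ≤ ‖h‖ ^ 2 := by
  rcases eq_or_ne h 0 with rfl | hh
  · simp
  · have hn : (0 : ℝ) < ‖h‖ := norm_pos_iff.mpr hh
    set a : ℂ := ((‖h‖⁻¹ : ℝ) : ℂ) with ha
    have h1 : ‖a • h‖ = 1 := by
      rw [norm_smul, ha]
      simp [abs_of_pos (inv_pos.mpr hn), inv_mul_cancel₀ hn.ne']
    have h2 := hw (a • h) h1
    rw [map_smul, inner_smul_left, inner_smul_right] at h2
    have hconj : (starRingEnd ℂ) a = a := by rw [ha, Complex.conj_ofReal]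
    rw [hconj] at h2
    have h3 : ‖a * (a * ⟪h, T h⟫_ℂ)‖ = ‖h‖⁻¹ * (‖h‖⁻¹ * ‖(⟪h, T h⟫_ℂ)‖) := by
      rw [norm_mul, norm_mul, ha]
      simp [abs_of_pos (inv_pos.mpr hn)]
    rw [h3] at h2
    have h4 : ‖(⟪h, T h⟫_ℂ)‖ = ‖h‖ * (‖h‖⁻¹ * (‖h‖⁻¹ * ‖(⟪h, T h⟫_ℂ)‖)) * ‖h‖ := by
      field_simp
    rw [h4, sq]
    have hnn : (0:ℝ) ≤ ‖h‖ := hn.le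
    nlinarith [h2, hn]

lemma inner_self_complex (x : H) : ⟪x, x⟫_ℂ = ((‖x‖ : ℝ) : ℂ) ^ 2 := by
  rw [inner_self_eq_norm_sq_to_K]
  norm_cast

end Hilbert

end StampfliAux

open StampfliAux Finset

section Master

variable {H : Type*} [NormedAddCommGroup H] [InnerProductSpace ℂ H]

/-- The master inequality: for any vector `g`, coefficients `c`, the chain
`x j = B^j g` satisfies a Jacobi-type quadratic form inequality obtained by
averaging the numerical-radius bounds for `A` and `B` over roots of unity. -/
lemma master (A B : H →L[ℂ] H) (hAB : A * B = 1)
    (hA : ∀ h : H, ‖(⟪h, A h⟫_ℂ)‖ ≤ ‖h‖ ^ 2)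
    (hB : ∀ h : H, ‖(⟪h, B h⟫_ℂ)‖ ≤ ‖h‖ ^ 2)
    (g : H) (M : ℕ) (c : ℕ → ℝ) :
    ∑ j ∈ range (M+1), c j * c (j+1) * (‖(B^j) g‖^2 + ‖(B^(j+1)) g‖^2)
      ≤ 2 * ∑ j ∈ range (M+2), (c j)^2 * ‖(B^j) g‖^2 := by
  set n : ℕ := M + 3 with hn
  set x : ℕ → H := fun j => (B ^ j) g with hx
  have hBx : ∀ j, B (x j) = x (j + 1) := by
    intro j
    simp only [hx, pow_succ' B j, ContinuousLinearMap.mul_apply]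
  have hAx : ∀ j, A (x (j + 1)) = x j := by
    intro j
    rw [← hBx j, ← ContinuousLinearMap.mul_apply, hAB, ContinuousLinearMap.one_apply]
  set u : ℕ → H := fun i => ∑ j ∈ range (M+2), (((c j : ℂ)) * E n ((j : ℤ) * (i : ℤ))) • x j
    with hu
  -- Step A : expansion of ⟪u i, T (u i)⟫
  have expand : ∀ (T : H →L[ℂ] H) (i : ℕ),
      ⟪u i, T (u i)⟫_ℂ = ∑ j ∈ range (M+2), ∑ k ∈ range (M+2),
        ((c j : ℂ) * (c k : ℂ) * E n (((k : ℤ) - (j : ℤ)) * (i : ℤ)))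
          * ⟪x j, T (x k)⟫_ℂ := by
    intro T i
    rw [hu]
    simp only [map_sum, map_smul]
    rw [sum_inner]
    refine sum_congr rfl fun j hj => ?_
    rw [inner_sum]
    refine sum_congr rfl fun k hk => ?_
    rw [inner_smul_left, inner_smul_right, map_mul, Complex.conj_ofReal, E_conj]
    have hE : E n (-((j : ℤ) * (i : ℤ))) * E n ((k : ℤ) * (i : ℤ))
        = E n (((k : ℤ) - (j : ℤ)) * (i : ℤ)) := by
      rw [E_mul_E]; congr 1; ring
    calc ((c j : ℂ)) * E n (-((j : ℤ) * (i : ℤ)))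
          * (((c k : ℂ)) * E n ((k : ℤ) * (i : ℤ)) * ⟪x j, T (x k)⟫_ℂ)
        = ((c j : ℂ) * (c k : ℂ))
            * ((E n (-((j : ℤ) * (i : ℤ))) * E n ((k : ℤ) * (i : ℤ))) * ⟪x j, T (x k)⟫_ℂ) := by
          ring
      _ = ((c j : ℂ) * (c k : ℂ) * E n (((k : ℤ) - (j : ℤ)) * (i : ℤ))) * ⟪x j, T (x k)⟫_ℂ := by
          rw [hE]; ring
  -- Step B : averaging over roots of unity
  have keyS : ∀ (T : H →L[ℂ] H) (s : ℤ), (s = -1 ∨ s = 0 ∨ s = 1) →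
      ∑ i ∈ range n, E n (s * (i : ℤ)) * ⟪u i, T (u i)⟫_ℂ
        = ∑ j ∈ range (M+2), ∑ k ∈ range (M+2),
            (if (k : ℤ) + s = (j : ℤ)
              then (n : ℂ) * ((c j : ℂ) * (c k : ℂ) * ⟪x j, T (x k)⟫_ℂ) else 0) := by
    intro T s hs
    simp only [expand, Finset.mul_sum]
    rw [Finset.sum_comm]
    refine sum_congr rfl fun j hj => ?_
    rw [Finset.sum_comm]
    refine sum_congr rfl fun k hk => ?_
    have hstep : ∀ i ∈ range n,
        E n (s * (i : ℤ)) * (((c j : ℂ) * (c k : ℂ) * E n (((k : ℤ) - (j : ℤ)) * (i : ℤ)))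
            * ⟪x j, T (x k)⟫_ℂ)
        = ((c j : ℂ) * (c k : ℂ) * ⟪x j, T (x k)⟫_ℂ) * (E n (s + ((k : ℤ) - (j : ℤ)))) ^ i := by
      intro i _
      rw [E_pow]
      have : E n (s * (i : ℤ)) * E n (((k : ℤ) - (j : ℤ)) * (i : ℤ))
          = E n ((s + ((k : ℤ) - (j : ℤ))) * (i : ℤ)) := by
        rw [E_mul_E]; congr 1; ring
      calc E n (s * (i : ℤ)) * (((c j : ℂ) * (c k : ℂ) * E n (((k : ℤ) - (j : ℤ)) * (i : ℤ)))
            * ⟪x j, T (x k)⟫_ℂ)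
          = ((c j : ℂ) * (c k : ℂ) * ⟪x j, T (x k)⟫_ℂ)
              * (E n (s * (i : ℤ)) * E n (((k : ℤ) - (j : ℤ)) * (i : ℤ))) := by ring
        _ = _ := by rw [this]
    rw [Finset.sum_congr rfl hstep, ← Finset.mul_sum]
    by_cases hzero : s + ((k : ℤ) - (j : ℤ)) = 0
    · have hcond : (k : ℤ) + s = (j : ℤ) := by omega
      rw [if_pos hcond, hzero, E_zero]
      simp only [one_pow, Finset.sum_const, Finset.card_range, nsmul_eq_mul]
      ring
    · have hcond : ¬ ((k : ℤ) + s = (j : ℤ)) := by omega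
      rw [if_neg hcond]
      have hjk : j ∈ range (M+2) := hj
      have hkk : k ∈ range (M+2) := hk
      have hjlt : j < M + 2 := mem_range.mp hjk
      have hklt : k < M + 2 := mem_range.mp hkk
      rw [orth n _ hzero (by rcases hs with h | h | h <;> omega)
        (by rcases hs with h | h | h <;> omega)]
      ring
  -- Instantiations
  have hSI : ∑ i ∈ range n, ⟪u i, u i⟫_ℂ
      = (n : ℂ) * ∑ j ∈ range (M+2), ((c j : ℂ) * (c j : ℂ) * ((‖x j‖ : ℂ)) ^ 2) := by
    have := keyS 1 0 (by tauto)
    simp only [zero_mul, E_zero, one_mul, ContinuousLinearMap.one_apply] at this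
    rw [this]
    rw [Finset.mul_sum]
    refine sum_congr rfl fun j hj => ?_
    have hcnd : ∀ k : ℕ, ((k : ℤ) + 0 = (j : ℤ)) ↔ (k = j) := by intro k; omega
    simp only [hcnd]
    rw [Finset.sum_ite_eq' (range (M+2)) j
      (fun k => (n : ℂ) * ((c j : ℂ) * (c k : ℂ) * ⟪x j, x k⟫_ℂ))]
    rw [if_pos hj, inner_self_complex]
  have hSA : ∑ i ∈ range n, E n ((-1) * (i : ℤ)) * ⟪u i, A (u i)⟫_ℂ
      = (n : ℂ) * ∑ j ∈ range (M+1), ((c j : ℂ) * (c (j+1) : ℂ) * ((‖x j‖ : ℂ)) ^ 2) := by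
    have := keyS A (-1) (by tauto)
    rw [this]
    have hcnd : ∀ j k : ℕ, ((k : ℤ) + (-1) = (j : ℤ)) ↔ (k = j + 1) := by intro j k; omega
    simp only [hcnd]
    have hinner : ∀ j, ∑ k ∈ range (M+2),
        (if k = j + 1 then (n : ℂ) * ((c j : ℂ) * (c k : ℂ) * ⟪x j, A (x k)⟫_ℂ) else 0)
        = (if j + 1 ∈ range (M+2)
            then (n : ℂ) * ((c j : ℂ) * (c (j+1) : ℂ) * ⟪x j, A (x (j+1))⟫_ℂ) else 0) := by
      intro j
      exact Finset.sum_ite_eq' (range (M+2)) (j+1)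
        (fun k => (n : ℂ) * ((c j : ℂ) * (c k : ℂ) * ⟪x j, A (x k)⟫_ℂ))
    simp only [hinner]
    have hsplit := Finset.sum_range_succ
      (fun j => if j + 1 ∈ range (M+2)
        then (n : ℂ) * ((c j : ℂ) * (c (j+1) : ℂ) * ⟪x j, A (x (j+1))⟫_ℂ) else 0) (M+1)
    rw [hsplit, if_neg (by simp), add_zero, Finset.mul_sum]
    refine sum_congr rfl fun j hj => ?_
    have hjlt : j < M + 1 := mem_range.mp hj
    rw [if_pos (mem_range.mpr (by omega)), hAx j, inner_self_complex]
  have hSB : ∑ i ∈ range n, E n (1 * (i : ℤ)) * ⟪u i, B (u i)⟫_ℂ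
      = (n : ℂ) * ∑ j ∈ range (M+1), ((c j : ℂ) * (c (j+1) : ℂ) * ((‖x (j+1)‖ : ℂ)) ^ 2) := by
    have := keyS B 1 (by tauto)
    rw [this]
    rw [Finset.sum_comm]
    have hcnd : ∀ j k : ℕ, ((k : ℤ) + 1 = (j : ℤ)) ↔ (j = k + 1) := by intro j k; omega
    simp only [hcnd]
    have hinner : ∀ k, ∑ j ∈ range (M+2),
        (if j = k + 1 then (n : ℂ) * ((c j : ℂ) * (c k : ℂ) * ⟪x j, B (x k)⟫_ℂ) else 0)
        = (if k + 1 ∈ range (M+2)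
            then (n : ℂ) * ((c (k+1) : ℂ) * (c k : ℂ) * ⟪x (k+1), B (x k)⟫_ℂ) else 0) := by
      intro k
      exact Finset.sum_ite_eq' (range (M+2)) (k+1)
        (fun j => (n : ℂ) * ((c j : ℂ) * (c k : ℂ) * ⟪x j, B (x k)⟫_ℂ))
    simp only [hinner]
    have hsplit := Finset.sum_range_succ
      (fun k => if k + 1 ∈ range (M+2)
        then (n : ℂ) * ((c (k+1) : ℂ) * (c k : ℂ) * ⟪x (k+1), B (x k)⟫_ℂ) else 0) (M+1)
    rw [hsplit, if_neg (by simp), add_zero, Finset.mul_sum]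
    refine sum_congr rfl fun k hk => ?_
    have hklt : k < M + 1 := mem_range.mp hk
    rw [if_pos (mem_range.mpr (by omega)), hBx k, inner_self_complex]
    ring
  -- Put the two diagonal sums together
  have hLHS : (((n : ℝ) * ∑ j ∈ range (M+1), c j * c (j+1) * (‖x j‖^2 + ‖x (j+1)‖^2) : ℝ) : ℂ)
      = (∑ i ∈ range n, E n ((-1) * (i : ℤ)) * ⟪u i, A (u i)⟫_ℂ)
        + (∑ i ∈ range n, E n (1 * (i : ℤ)) * ⟪u i, B (u i)⟫_ℂ) := by
    have hsum2 : (n : ℂ) * ∑ j ∈ range (M+1),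
        ((c j : ℂ) * (c (j+1) : ℂ) * (((‖x j‖ : ℝ) : ℂ) ^ 2 + ((‖x (j+1)‖ : ℝ) : ℂ) ^ 2))
        = (∑ i ∈ range n, E n ((-1) * (i : ℤ)) * ⟪u i, A (u i)⟫_ℂ)
          + (∑ i ∈ range n, E n (1 * (i : ℤ)) * ⟪u i, B (u i)⟫_ℂ) := by
      rw [hSA, hSB, ← mul_add, ← Finset.sum_add_distrib]
      congr 1
      refine sum_congr rfl fun j _ => ?_
      ring
    rw [← hsum2]
    push_cast
    ring_nf
  -- Norm bound on the right-hand side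
  have hRHSbound : ∀ i ∈ range n,
      ‖E n ((-1) * (i : ℤ)) * ⟪u i, A (u i)⟫_ℂ + E n (1 * (i : ℤ)) * ⟪u i, B (u i)⟫_ℂ‖
        ≤ 2 * ‖u i‖ ^ 2 := by
    intro i _
    calc ‖E n ((-1) * (i : ℤ)) * ⟪u i, A (u i)⟫_ℂ + E n (1 * (i : ℤ)) * ⟪u i, B (u i)⟫_ℂ‖
        ≤ ‖E n ((-1) * (i : ℤ)) * ⟪u i, A (u i)⟫_ℂ‖ + ‖E n (1 * (i : ℤ)) * ⟪u i, B (u i)⟫_ℂ‖ :=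
          norm_add_le _ _
      _ = ‖(⟪u i, A (u i)⟫_ℂ)‖ + ‖(⟪u i, B (u i)⟫_ℂ)‖ := by
          rw [norm_mul, norm_mul, E_norm, E_norm, one_mul, one_mul]
      _ ≤ ‖u i‖ ^ 2 + ‖u i‖ ^ 2 := add_le_add (hA (u i)) (hB (u i))
      _ = 2 * ‖u i‖ ^ 2 := by ring
  -- sum of ‖u i‖²
  have hsumu : ∑ i ∈ range n, ‖u i‖ ^ 2
      = (n : ℝ) * ∑ j ∈ range (M+2), (c j)^2 * ‖x j‖ ^ 2 := by
    have hC : ((∑ i ∈ range n, ‖u i‖ ^ 2 : ℝ) : ℂ)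
        = ((((n : ℝ) * ∑ j ∈ range (M+2), (c j)^2 * ‖x j‖ ^ 2 : ℝ)) : ℂ) := by
      rw [Complex.ofReal_sum]
      have hstep : ∀ i ∈ range n, ((‖u i‖ ^ 2 : ℝ) : ℂ) = ⟪u i, u i⟫_ℂ := by
        intro i _
        rw [inner_self_complex]
        push_cast
        ring
      rw [sum_congr rfl hstep, hSI, Complex.ofReal_mul, Complex.ofReal_sum]
      congr 1
      refine sum_congr rfl fun j _ => ?_
      push_cast
      ring
    exact_mod_cast hC
  -- Main inequality
  have hmain : (n : ℝ) * ∑ j ∈ range (M+1), c j * c (j+1) * (‖x j‖^2 + ‖x (j+1)‖^2)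
      ≤ (n : ℝ) * (2 * ∑ j ∈ range (M+2), (c j)^2 * ‖x j‖ ^ 2) := by
    have h1 : (n : ℝ) * ∑ j ∈ range (M+1), c j * c (j+1) * (‖x j‖^2 + ‖x (j+1)‖^2)
        ≤ ‖(∑ i ∈ range n, E n ((-1) * (i : ℤ)) * ⟪u i, A (u i)⟫_ℂ)
            + (∑ i ∈ range n, E n (1 * (i : ℤ)) * ⟪u i, B (u i)⟫_ℂ)‖ := by
      calc (n : ℝ) * ∑ j ∈ range (M+1), c j * c (j+1) * (‖x j‖^2 + ‖x (j+1)‖^2)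
          ≤ |(n : ℝ) * ∑ j ∈ range (M+1), c j * c (j+1) * (‖x j‖^2 + ‖x (j+1)‖^2)| :=
            le_abs_self _
        _ = ‖(((n : ℝ) * ∑ j ∈ range (M+1), c j * c (j+1) * (‖x j‖^2 + ‖x (j+1)‖^2) : ℝ) : ℂ)‖ := by
            rw [Complex.norm_real, Real.norm_eq_abs]
        _ = _ := by rw [hLHS]
    have h2 : ‖(∑ i ∈ range n, E n ((-1) * (i : ℤ)) * ⟪u i, A (u i)⟫_ℂ)
            + (∑ i ∈ range n, E n (1 * (i : ℤ)) * ⟪u i, B (u i)⟫_ℂ)‖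
        ≤ ∑ i ∈ range n, 2 * ‖u i‖ ^ 2 := by
      rw [← Finset.sum_add_distrib]
      exact le_trans (norm_sum_le _ _) (Finset.sum_le_sum hRHSbound)
    have h3 : ∑ i ∈ range n, 2 * ‖u i‖ ^ 2 = (n : ℝ) * (2 * ∑ j ∈ range (M+2), (c j)^2 * ‖x j‖ ^ 2) := by
      rw [← Finset.mul_sum, hsumu]; ring
    linarith
  have hnpos : (0 : ℝ) < (n : ℝ) := by positivity
  have := (mul_le_mul_iff_right₀ hnpos).mp hmain
  simpa [hx] using this

end Master

section Isometry

variable {H : Type*} [NormedAddCommGroup H] [InnerProductSpace ℂ H]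

lemma pow_cancel (A B : H →L[ℂ] H) (hBA : B * A = 1) :
    ∀ k : ℕ, (B ^ k) * (A ^ k) = 1 := by
  intro k
  induction k with
  | zero => simp
  | succ k ih =>
    rw [pow_succ B k, pow_succ' A k, mul_assoc (B ^ k) B (A * A ^ k), ← mul_assoc B A (A ^ k),
      hBA, one_mul, ih]

/-- Core lemma: `B` is an isometry. -/
lemma norm_B_eq (A B : H →L[ℂ] H) (hAB : A * B = 1) (hBA : B * A = 1)
    (hA : ∀ h : H, ‖(⟪h, A h⟫_ℂ)‖ ≤ ‖h‖ ^ 2)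
    (hB : ∀ h : H, ‖(⟪h, B h⟫_ℂ)‖ ≤ ‖h‖ ^ 2)
    (f : H) : ‖B f‖ = ‖f‖ := by
  rcases eq_or_ne f 0 with rfl | hf
  · simp
  -- the key quantitative inequality for every N
  have key : ∀ N : ℕ, ((N : ℝ) + 1) * (‖f‖ - ‖B f‖)^2 ≤ 2 * (‖f‖ * ‖B f‖) := by
    intro N
    set M : ℕ := 2*N + 2 with hM
    set g : H := (A ^ (N+1)) f with hg
    set q : ℕ → ℝ := fun j => ‖(B ^ j) g‖ with hq
    have hBAg : (B ^ (N+1)) g = f := by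
      rw [hg, ← ContinuousLinearMap.mul_apply, pow_cancel A B hBA, ContinuousLinearMap.one_apply]
    have hBAg' : (B ^ (N+2)) g = B f := by
      rw [show N + 2 = (N+1) + 1 from rfl, pow_succ' B (N+1), ContinuousLinearMap.mul_apply,
        hBAg]
    have hqpos : ∀ j, 0 < q j := by
      intro j
      rw [hq]
      simp only []
      rw [norm_pos_iff]
      intro hzero
      have : g = 0 := by
        have := congrArg (fun v => (A ^ j) v) hzero
        simpa only [← ContinuousLinearMap.mul_apply, pow_cancel B A hAB,
          ContinuousLinearMap.one_apply, map_zero] using this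
      apply hf
      rw [← hBAg, this, map_zero]
    set d : ℕ → ℝ := fun j => min (j : ℝ) ((2*(N:ℝ)+3) - (j : ℝ)) with hd
    have hdlow : ∀ j : ℕ, j ≤ N + 1 → d j = j := by
      intro j hj
      rw [hd]
      refine min_eq_left ?_
      have : (j : ℝ) ≤ (N : ℝ) + 1 := by exact_mod_cast hj
      linarith
    have hdhigh : ∀ j : ℕ, N + 2 ≤ j → j ≤ 2*N + 3 → d j = (2*(N:ℝ)+3) - (j:ℝ) := by
      intro j hj1 hj2
      rw [hd]
      refine min_eq_right ?_
      have h1 : ((N : ℝ) + 2) ≤ (j : ℝ) := by exact_mod_cast hj1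
      have h2 : (j : ℝ) ≤ 2*(N:ℝ) + 3 := by exact_mod_cast hj2
      linarith
    have hdnn : ∀ j : ℕ, j ≤ 2*N+3 → 0 ≤ d j := by
      intro j hj
      rw [hd]
      have : (j : ℝ) ≤ 2*(N:ℝ)+3 := by exact_mod_cast hj
      exact le_min (by positivity) (by linarith)
    set c : ℕ → ℝ := fun j => d j / q j with hc
    have mst := master A B hAB hA hB g M c
    -- rewrite the master inequality in terms of d and q
    have hterm1 : ∀ j ∈ range (M+2), (c j)^2 * ‖(B^j) g‖^2 = (d j)^2 := by
      intro j _
      rw [hc]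
      simp only []
      have := (hqpos j).ne'
      field_simp [hq]
      rfl
    have hterm2 : ∀ j ∈ range (M+1),
        c j * c (j+1) * (‖(B^j) g‖^2 + ‖(B^(j+1)) g‖^2)
          = 2 * (d j * d (j+1)) + d j * d (j+1) * (q j - q (j+1))^2 / (q j * q (j+1)) := by
      intro j _
      rw [hc]
      simp only []
      have h1 := (hqpos j).ne'
      have h2 := (hqpos (j+1)).ne'
      have e1 : ‖(B^j) g‖ = q j := rfl
      have e2 : ‖(B^(j+1)) g‖ = q (j+1) := rfl
      rw [e1, e2]
      field_simp
      ring
    rw [Finset.sum_congr rfl hterm2, Finset.sum_congr rfl hterm1] at mst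
    rw [Finset.sum_add_distrib] at mst
    -- single out the center term
    have hcentermem : N + 1 ∈ range (M+1) := mem_range.mpr (by omega)
    have htnn : ∀ j ∈ range (M+1),
        0 ≤ d j * d (j+1) * (q j - q (j+1))^2 / (q j * q (j+1)) := by
      intro j hj
      have hjlt : j < M + 1 := mem_range.mp hj
      have hd1 : 0 ≤ d j := hdnn j (by omega)
      have hd2 : 0 ≤ d (j+1) := hdnn (j+1) (by omega)
      have hq1 := hqpos j
      have hq2 := hqpos (j+1)
      positivity
    have hsingle : d (N+1) * d (N+2) * (q (N+1) - q (N+2))^2 / (q (N+1) * q (N+2))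
        ≤ ∑ j ∈ range (M+1), d j * d (j+1) * (q j - q (j+1))^2 / (q j * q (j+1)) := by
      exact Finset.single_le_sum htnn hcentermem
    -- telescoping identity
    have htele : 2 * ∑ j ∈ range (M+2), (d j)^2
        - 2 * ∑ j ∈ range (M+1), d j * d (j+1)
        = ∑ j ∈ range (M+1), (d (j+1) - d j)^2 + (d 0)^2 + (d (M+1))^2 := by
      have e1 : ∑ j ∈ range (M+1), (d (j+1))^2 = ∑ j ∈ range (M+2), (d j)^2 - (d 0)^2 := by
        rw [Finset.sum_range_succ' (fun j => (d j)^2) (M+1)]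
        ring
      have e2 : ∑ j ∈ range (M+1), (d j)^2 = ∑ j ∈ range (M+2), (d j)^2 - (d (M+1))^2 := by
        rw [Finset.sum_range_succ (fun j => (d j)^2) (M+1)]
        ring
      have e3 : ∑ j ∈ range (M+1), (d (j+1) - d j)^2
          = ∑ j ∈ range (M+1), (d (j+1))^2 + ∑ j ∈ range (M+1), (d j)^2
            - 2 * ∑ j ∈ range (M+1), d j * d (j+1) := by
        rw [← Finset.sum_add_distrib, Finset.mul_sum, ← Finset.sum_sub_distrib]
        refine sum_congr rfl fun j _ => ?_
        ring
      rw [e3, e1, e2]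
      ring
    have hd0 : d 0 = 0 := by
      rw [hd]; simp only [Nat.cast_zero, sub_zero]
      exact min_eq_left (by positivity)
    have hdM1 : d (M+1) = 0 := by
      have : d (M+1) = (2*(N:ℝ)+3) - ((M+1 : ℕ) : ℝ) := hdhigh (M+1) (by omega) (by omega)
      rw [this, hM]
      push_cast
      ring
    -- compute the telescoping sum = 2N+2
    have hdelta : ∑ j ∈ range (M+1), (d (j+1) - d j)^2 = 2*(N:ℝ) + 2 := by
      have hterm : ∀ j ∈ range (M+1), (d (j+1) - d j)^2 = if j = N+1 then 0 else 1 := by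
        intro j hj
        have hjlt : j < M + 1 := mem_range.mp hj
        rcases lt_trichotomy j (N+1) with hlt | heq | hgt
        · have e1 : d j = j := hdlow j (by omega)
          have e2 : d (j+1) = (j+1 : ℕ) := hdlow (j+1) (by omega)
          rw [if_neg (by omega), e1, e2]
          push_cast
          ring
        · rw [heq, if_pos rfl]
          have e1 : d (N+1) = ((N+1 : ℕ) : ℝ) := hdlow (N+1) le_rfl
          have e2 : d (N+2) = (2*(N:ℝ)+3) - ((N+2 : ℕ) : ℝ) := hdhigh (N+2) (by omega) (by omega)
          rw [show N+1+1 = N+2 from rfl, e2, e1]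
          push_cast
          ring
        · have e1 : d j = (2*(N:ℝ)+3) - (j : ℝ) := hdhigh j (by omega) (by omega)
          have e2 : d (j+1) = (2*(N:ℝ)+3) - ((j+1:ℕ) : ℝ) := hdhigh (j+1) (by omega) (by omega)
          rw [if_neg (by omega), e1, e2]
          push_cast
          ring
      rw [Finset.sum_congr rfl hterm]
      have : ∀ j ∈ range (M+1), (if j = N+1 then (0:ℝ) else 1)
          = 1 - (if j = N+1 then (1:ℝ) else 0) := by
        intro j _
        by_cases h : j = N+1 <;> simp [h]
      rw [Finset.sum_congr rfl this, Finset.sum_sub_distrib, Finset.sum_const,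
        Finset.sum_ite_eq' (range (M+1)) (N+1) (fun _ => (1:ℝ)), if_pos hcentermem]
      rw [Finset.card_range, hM]
      push_cast
      ring
    -- center values
    have hdc1 : d (N+1) = (N:ℝ)+1 := by
      have := hdlow (N+1) le_rfl
      rw [this]; push_cast; ring
    have hdc2 : d (N+2) = (N:ℝ)+1 := by
      have := hdhigh (N+2) (by omega) (by omega)
      rw [this]; push_cast; ring
    have hqc1 : q (N+1) = ‖f‖ := by rw [hq]; simp only []; rw [hBAg]
    have hqc2 : q (N+2) = ‖B f‖ := by rw [hq]; simp only []; rw [hBAg']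
    -- combine
    have hcomb : ((N:ℝ)+1) * ((N:ℝ)+1) * (‖f‖ - ‖B f‖)^2 / (‖f‖ * ‖B f‖)
        ≤ 2*(N:ℝ) + 2 := by
      have h0 : d (N+1) * d (N+2) * (q (N+1) - q (N+2))^2 / (q (N+1) * q (N+2))
          = ((N:ℝ)+1) * ((N:ℝ)+1) * (‖f‖ - ‖B f‖)^2 / (‖f‖ * ‖B f‖) := by
        rw [hdc1, hdc2, hqc1, hqc2]
      calc ((N:ℝ)+1) * ((N:ℝ)+1) * (‖f‖ - ‖B f‖)^2 / (‖f‖ * ‖B f‖)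
          = d (N+1) * d (N+2) * (q (N+1) - q (N+2))^2 / (q (N+1) * q (N+2)) := h0.symm
        _ ≤ ∑ j ∈ range (M+1), d j * d (j+1) * (q j - q (j+1))^2 / (q j * q (j+1)) := hsingle
        _ ≤ 2 * ∑ j ∈ range (M+2), (d j)^2 - 2 * ∑ j ∈ range (M+1), d j * d (j+1) := by
            have hms : ∑ j ∈ range (M+1), 2 * (d j * d (j+1))
                = 2 * ∑ j ∈ range (M+1), d j * d (j+1) := by
              rw [Finset.mul_sum]
            linarith [mst, hms]
        _ = ∑ j ∈ range (M+1), (d (j+1) - d j)^2 + (d 0)^2 + (d (M+1))^2 := htele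
        _ = 2*(N:ℝ) + 2 := by rw [hdelta, hd0, hdM1]; ring
    -- clear denominators
    have hfpos : (0:ℝ) < ‖f‖ := norm_pos_iff.mpr hf
    have hBfpos : (0:ℝ) < ‖B f‖ := by
      rw [← hqc2]; exact hqpos (N+2)
    have hprod : (0:ℝ) < ‖f‖ * ‖B f‖ := mul_pos hfpos hBfpos
    rw [div_le_iff₀ hprod] at hcomb
    have hNp : (0:ℝ) < (N:ℝ) + 1 := by positivity
    nlinarith [hcomb, hNp, hprod]
  -- conclude from key
  by_contra hne
  have hsub : ‖f‖ - ‖B f‖ ≠ 0 := sub_ne_zero.mpr (Ne.symm hne)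
  have hsq : 0 < (‖f‖ - ‖B f‖)^2 :=
    lt_of_le_of_ne (sq_nonneg _) (Ne.symm (pow_ne_zero 2 hsub))
  obtain ⟨N, hN⟩ := exists_nat_gt (2 * (‖f‖ * ‖B f‖) / (‖f‖ - ‖B f‖)^2)
  have hk := key N
  have h2 : 2 * (‖f‖ * ‖B f‖) / (‖f‖ - ‖B f‖)^2 < (N:ℝ) + 1 := by linarith
  rw [div_lt_iff₀ hsq] at h2
  nlinarith [hk, h2, hsq]

end Isometry

/-- (Stampfli) If `A` is an invertible bounded operator on a complex Hilbert space with
numerical radius `w(A) ≤ 1` and `w(A⁻¹) ≤ 1`, then `A` is unitary. -/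
theorem unitary_of_numericalRadius_le_one
    {H : Type*} [NormedAddCommGroup H] [InnerProductSpace ℂ H] [CompleteSpace H]
    (A B : H →L[ℂ] H) (hAB : A * B = 1) (hBA : B * A = 1)
    (hwA : ∀ h : H, ‖h‖ = 1 → ‖(⟪h, A h⟫_ℂ)‖ ≤ 1)
    (hwB : ∀ h : H, ‖h‖ = 1 → ‖(⟪h, B h⟫_ℂ)‖ ≤ 1) :
    ContinuousLinearMap.adjoint A * A = 1 ∧ A * ContinuousLinearMap.adjoint A = 1 := by
  have hA : ∀ h : H, ‖(⟪h, A h⟫_ℂ)‖ ≤ ‖h‖ ^ 2 := StampfliAux.nr_bound A hwA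
  have hB : ∀ h : H, ‖(⟪h, B h⟫_ℂ)‖ ≤ ‖h‖ ^ 2 := StampfliAux.nr_bound B hwB
  -- A is an isometry (apply the core lemma with roles of A and B swapped)
  have hAiso : ∀ f : H, ‖A f‖ = ‖f‖ := fun f => norm_B_eq B A hBA hAB hB hA f
  have h1 : ContinuousLinearMap.adjoint A ∘L A = 1 :=
    (ContinuousLinearMap.norm_map_iff_adjoint_comp_self A).mp hAiso
  have h1' : ContinuousLinearMap.adjoint A * A = 1 := h1
  refine ⟨h1', ?_⟩
  have hadj : ContinuousLinearMap.adjoint A = B := by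
    calc ContinuousLinearMap.adjoint A
        = ContinuousLinearMap.adjoint A * (A * B) := by rw [hAB, mul_one]
      _ = (ContinuousLinearMap.adjoint A * A) * B := by rw [mul_assoc]
      _ = B := by rw [h1', one_mul]
  rw [hadj, hAB]
end

section
/- Let r ≥ 1, set y = √(r² − 1), and let A be the 2×2 complex matrix A = [[1, 2y], [0, −1]]. Then A is its own inverse (A·A = I), its numerical radius satisfies w(A) = r (so also w(A⁻¹) = r), and its operator norm satisfies ‖A‖ = r + √(r² − 1) = y + √(1 + y²). -/
open scoped InnerProductSpace

set_option maxHeartbeats 1000000 in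
/-- For `r ≥ 1` and `y = √(r² − 1)`, the matrix `A = [[1, 2y], [0, −1]]` is its own
inverse, has numerical radius `w(A) = r` and operator norm
`‖A‖ = r + √(r² − 1) = y + √(1 + y²)`. -/
theorem two_by_two_example (r : ℝ) (hr : 1 ≤ r)
    (y : ℝ) (hy : y = Real.sqrt (r ^ 2 - 1))
    (A : Matrix (Fin 2) (Fin 2) ℂ) (hA : A = !![1, 2 * (y : ℂ); 0, -1]) :
    A * A = 1 ∧
    sSup {x : ℝ | ∃ h : EuclideanSpace ℂ (Fin 2), ‖h‖ = 1 ∧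
        x = ‖(⟪h, Matrix.toEuclideanCLM (𝕜 := ℂ) A h⟫_ℂ)‖} = r ∧
    ‖Matrix.toEuclideanCLM (𝕜 := ℂ) A‖ = r + Real.sqrt (r ^ 2 - 1) ∧
    r + Real.sqrt (r ^ 2 - 1) = y + Real.sqrt (1 + y ^ 2) := by
  have hy0 : 0 ≤ y := hy ▸ Real.sqrt_nonneg _
  have hy2 : y ^ 2 = r ^ 2 - 1 := by
    rw [hy]; exact Real.sq_sqrt (by nlinarith)
  have hc : Real.sqrt (1 + y ^ 2) = r := by
    rw [hy2, show (1 : ℝ) + (r ^ 2 - 1) = r ^ 2 by ring]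
    exact Real.sqrt_sq (by linarith)
  subst hA
  set T := Matrix.toEuclideanCLM (𝕜 := ℂ) !![1, 2 * (y : ℂ); 0, -1] with hT
  have happ : ∀ (x : EuclideanSpace ℂ (Fin 2)),
      (T x 0 = x 0 + 2 * (y:ℂ) * x 1) ∧ (T x 1 = - x 1) := by
    intro x
    have h0 := congrFun (Matrix.ofLp_toEuclideanCLM (𝕜 := ℂ) !![1, 2 * (y : ℂ); 0, -1] x)
    constructor
    · have := h0 0
      simpa [hT, Matrix.mulVec, dotProduct, Fin.sum_univ_two] using this
    · have := h0 1
      simpa [hT, Matrix.mulVec, dotProduct, Fin.sum_univ_two] using this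
  refine ⟨?_, ?_, ?_, ?_⟩
  · rw [Matrix.one_fin_two, Matrix.mul_fin_two]
    norm_num
  · -- numerical radius
    have hr0 : (0:ℝ) < r := by linarith
    have hinner : ∀ (x : EuclideanSpace ℂ (Fin 2)),
        ⟪x, T x⟫_ℂ = (starRingEnd ℂ) (x 0) * (x 0) + 2*(y:ℂ) * ((starRingEnd ℂ) (x 0) * x 1)
          - (starRingEnd ℂ) (x 1) * (x 1) := by
      intro x
      obtain ⟨h0, h1⟩ := happ x
      simp only [PiLp.inner_apply, RCLike.inner_apply, Fin.sum_univ_two, h0, h1]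
      ring
    apply IsGreatest.csSup_eq
    constructor
    · -- membership: witness
      set p := Real.sqrt ((r+1)/(2*r)) with hpd
      set q := Real.sqrt ((r-1)/(2*r)) with hqd
      have hp0 : 0 ≤ p := Real.sqrt_nonneg _
      have hq0 : 0 ≤ q := Real.sqrt_nonneg _
      have hp2 : p^2 = (r+1)/(2*r) := Real.sq_sqrt (by positivity)
      have hq2 : q^2 = (r-1)/(2*r) := Real.sq_sqrt (by
        apply div_nonneg (by linarith) (by linarith))
      have hpq : p * q = y/(2*r) := by
        rw [hpd, hqd, ← Real.sqrt_mul (by positivity)]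
        rw [show (r+1)/(2*r) * ((r-1)/(2*r)) = (y/(2*r))^2 by
          field_simp; nlinarith]
        exact Real.sqrt_sq (by positivity)
      refine ⟨WithLp.toLp 2 ![(p:ℂ), (q:ℂ)], ?_, ?_⟩
      · rw [EuclideanSpace.norm_eq, Fin.sum_univ_two]
        show Real.sqrt (‖(p:ℂ)‖^2 + ‖(q:ℂ)‖^2) = 1
        rw [Complex.norm_real, Complex.norm_real, Real.norm_eq_abs, Real.norm_eq_abs,
          abs_of_nonneg hp0, abs_of_nonneg hq0]
        rw [show p^2 + q^2 = 1 by rw [hp2, hq2]; field_simp; ring]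
        exact Real.sqrt_one
      · rw [hinner]
        show (r:ℝ) = ‖(starRingEnd ℂ) (p:ℂ) * (p:ℂ) + 2*(y:ℂ) * ((starRingEnd ℂ) (p:ℂ) * (q:ℂ))
          - (starRingEnd ℂ) (q:ℂ) * (q:ℂ)‖
        rw [Complex.conj_ofReal, Complex.conj_ofReal]
        have : ((p:ℂ) * (p:ℂ) + 2*(y:ℂ) * ((p:ℂ) * (q:ℂ)) - (q:ℂ) * (q:ℂ))
            = ((p^2 + 2*y*(p*q) - q^2 : ℝ) : ℂ) := by push_cast; ring
        rw [this]
        rw [show p^2 + 2*y*(p*q) - q^2 = r by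
          rw [hp2, hq2, hpq]; field_simp; nlinarith]
        rw [Complex.norm_real, Real.norm_eq_abs, abs_of_nonneg hr0.le]
    · -- upper bound
      rintro x ⟨h, hh, rfl⟩
      rw [hinner]
      set a := h 0 with ha
      set b := h 1 with hb
      have hPQ : ‖a‖^2 + ‖b‖^2 = 1 := by
        have h2 := hh
        rw [EuclideanSpace.norm_eq, Fin.sum_univ_two, Real.sqrt_eq_one] at h2
        exact h2
      have hca : (starRingEnd ℂ) a * a = ((‖a‖^2 : ℝ) : ℂ) := by
        rw [← Complex.normSq_eq_conj_mul_self]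
        norm_cast
        simp [Complex.normSq_eq_norm_sq]
      have hcb : (starRingEnd ℂ) b * b = ((‖b‖^2 : ℝ) : ℂ) := by
        rw [← Complex.normSq_eq_conj_mul_self]
        norm_cast
        simp [Complex.normSq_eq_norm_sq]
      set z := (starRingEnd ℂ) a * b with hzd
      have hz : z.re^2 + z.im^2 = ‖a‖^2 * ‖b‖^2 := by
        have h1 : Complex.normSq z = Complex.normSq a * Complex.normSq b := by
          rw [hzd, Complex.normSq_mul, Complex.normSq_conj]
        rw [Complex.normSq_apply] at h1
        rw [show Complex.normSq a = ‖a‖^2 by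
          simp [Complex.normSq_eq_norm_sq]] at h1
        rw [show Complex.normSq b = ‖b‖^2 by
          simp [Complex.normSq_eq_norm_sq]] at h1
        nlinarith [h1]
      rw [hca, hcb]
      set w : ℂ := ((‖a‖^2 : ℝ) : ℂ) + 2*(y:ℂ)*z - ((‖b‖^2 : ℝ) : ℂ) with hwd
      have hw : w = Complex.mk (‖a‖^2 - ‖b‖^2 + 2*y*z.re) (2*y*z.im) := by
        rw [hwd]
        apply Complex.ext <;> simp [← Complex.ofReal_pow] <;> ring
      have hnw : ‖w‖^2 = (‖a‖^2 - ‖b‖^2 + 2*y*z.re)^2 + (2*y*z.im)^2 := by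
        rw [hw, Complex.sq_norm, Complex.normSq_apply]
        ring
      have e6 : 4*z.re^2 + 4*z.im^2 = 1 - (‖a‖^2-‖b‖^2)^2 := by
        linear_combination 4*hz + (‖a‖^2+‖b‖^2+1)*hPQ
      have e5 : 4*y^2*z.re^2 + 4*y^2*z.im^2 = y^2*(1 - (‖a‖^2-‖b‖^2)^2) := by
        linear_combination (y^2)*e6
      have hle2 : ‖w‖^2 ≤ r^2 := by
        rw [hnw]
        nlinarith [sq_nonneg ((‖a‖^2 - ‖b‖^2)*y - 2*z.re), sq_nonneg z.im, e5, e6, hy2,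
          mul_nonneg (mul_nonneg hy0 hy0) (sq_nonneg z.im)]
      have hfin := Real.sqrt_le_sqrt hle2
      rwa [Real.sqrt_sq (norm_nonneg w), Real.sqrt_sq hr0.le] at hfin
  · -- operator norm
    rw [← hy]
    have hs0 : 0 ≤ r + y := by linarith
    apply le_antisymm
    · apply ContinuousLinearMap.opNorm_le_bound _ hs0
      intro x
      obtain ⟨h0, h1⟩ := happ x
      rw [EuclideanSpace.norm_eq, EuclideanSpace.norm_eq]
      rw [Fin.sum_univ_two, Fin.sum_univ_two, h0, h1]
      rw [show (r+y) * Real.sqrt (‖x 0‖^2 + ‖x 1‖^2)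
          = Real.sqrt ((r+y)^2 * (‖x 0‖^2 + ‖x 1‖^2)) by
        rw [Real.sqrt_mul (by positivity), Real.sqrt_sq hs0]]
      apply Real.sqrt_le_sqrt
      set p := ‖x 0‖ with hp
      set q := ‖x 1‖ with hq
      have hp0 : 0 ≤ p := norm_nonneg _
      have hq0 : 0 ≤ q := norm_nonneg _
      have hb : ‖x 0 + 2 * (y:ℂ) * x 1‖ ≤ p + 2 * y * q := by
        calc ‖x 0 + 2 * (y:ℂ) * x 1‖ ≤ ‖x 0‖ + ‖2 * (y:ℂ) * x 1‖ := norm_add_le _ _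
          _ = p + 2 * y * q := by
              rw [norm_mul, norm_mul]
              simp [Complex.norm_real, abs_of_nonneg hy0, hp, hq]
      have hbn : (0:ℝ) ≤ p + 2 * y * q := by positivity
      have hident : (r+y) * ((r+y)*p^2 + (r-y)*q^2 - 2*p*q) = ((r+y)*p - q)^2 := by
        linear_combination (-q^2) * hy2
      have hbr : 0 ≤ (r+y)*p^2 + (r-y)*q^2 - 2*p*q := by
        have hpos : (0:ℝ) < r + y := by linarith
        nlinarith [sq_nonneg ((r+y)*p - q)]
      have e1 : y^2*p^2 = (r^2-1)*p^2 := by rw [hy2]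
      have e2 : y^2*q^2 = (r^2-1)*q^2 := by rw [hy2]
      have key : (p + 2 * y * q)^2 + ‖- x 1‖^2 ≤ (r+y)^2 * (p^2 + q^2) := by
        rw [norm_neg, ← hq]
        nlinarith [mul_nonneg hy0 hbr, e1, e2]
      calc ‖x 0 + 2 * (y:ℂ) * x 1‖^2 + ‖- x 1‖^2
          ≤ (p + 2 * y * q)^2 + ‖- x 1‖^2 := by
            have := pow_le_pow_left₀ (norm_nonneg _) hb 2
            linarith
        _ ≤ (r+y)^2 * (p^2 + q^2) := key
    · set s := r + y with hsdef
      set v : EuclideanSpace ℂ (Fin 2) := WithLp.toLp 2 ![(1:ℂ), (s:ℂ)] with hv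
      have hv0 : v 0 = 1 := rfl
      have hv1 : v 1 = (s:ℂ) := rfl
      obtain ⟨h0, h1⟩ := happ v
      have hs2 : 1 + 2*y*s = s^2 := by rw [hsdef]; nlinarith
      have hTv0 : T v 0 = ((s^2 : ℝ) : ℂ) := by
        rw [h0, hv0, hv1]
        show (1:ℂ) + 2*(y:ℂ)*(s:ℂ) = ((s^2 : ℝ) : ℂ)
        exact_mod_cast hs2
      have hTv1 : T v 1 = -(s:ℂ) := by rw [h1, hv1]
      have hnv : ‖v‖ = Real.sqrt (1 + s^2) := by
        rw [EuclideanSpace.norm_eq, Fin.sum_univ_two, hv0, hv1]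
        simp [Complex.norm_real, abs_of_nonneg hs0]
      have hnTv : ‖T v‖ = s * Real.sqrt (1 + s^2) := by
        rw [EuclideanSpace.norm_eq, Fin.sum_univ_two, hTv0, hTv1]
        rw [norm_neg]
        simp only [Complex.norm_real, Real.norm_eq_abs, abs_of_nonneg hs0,
          abs_of_nonneg (sq_nonneg s : (0:ℝ) ≤ s^2)]
        rw [show (s^2)^2 + s^2 = s^2 * (1 + s^2) by ring]
        rw [Real.sqrt_mul (sq_nonneg s), Real.sqrt_sq hs0]
      have hle := T.le_opNorm v
      rw [hnTv, hnv] at hle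
      have hpos : 0 < Real.sqrt (1 + s^2) := Real.sqrt_pos.mpr (by positivity)
      exact le_of_mul_le_mul_right hle hpos
  · rw [← hy, hc]; ring
end

section
/- Let 1 ≤ ρ ≤ 2, let H be a complex Hilbert space, and let A be an invertible bounded linear operator on H. If w_ρ(A) ≤ 1 and w_ρ(A⁻¹) ≤ 1, then A is unitary. -/
open scoped InnerProductSpace
open Finset

section AndoLiAux

variable {H : Type*} [NormedAddCommGroup H] [InnerProductSpace ℂ H]

private lemma orth_sum {N : ℕ} {ζ : ℂ} (hζ : IsPrimitiveRoot ζ N)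
    (m : ℤ) (hm : m.natAbs < N) :
    ∑ n ∈ Finset.range N, ζ ^ (m * (n : ℤ)) = if m = 0 then (N : ℂ) else 0 := by
  rcases eq_or_ne m 0 with rfl | hm0
  · simp
  · rw [if_neg hm0]
    have hζm : ζ ^ m ≠ 1 := by
      intro hone
      rw [hζ.zpow_eq_one_iff_dvd] at hone
      have h2 : ((N:ℤ)).natAbs ∣ m.natAbs := Int.natAbs_dvd_natAbs.mpr hone
      simp only [Int.natAbs_natCast] at h2
      have := Nat.le_of_dvd (Int.natAbs_pos.mpr hm0) h2
      omega
    have hrw : ∀ n : ℕ, ζ ^ (m * (n:ℤ)) = (ζ ^ m) ^ n := by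
      intro n; rw [zpow_mul, zpow_natCast]
    simp only [hrw]
    rw [geom_sum_eq hζm]
    have hN1 : (ζ ^ m) ^ N = 1 := by
      rw [← zpow_natCast (ζ ^ m) N, ← zpow_mul, mul_comm, zpow_mul, zpow_natCast,
        hζ.pow_eq_one, one_zpow]
    rw [hN1]
    simp

private lemma diag_sum (v w : ℤ → H) (c : ℤ → ℝ) (K N : ℕ) (hN : 2 * K + 2 ≤ N)
    {ζ : ℂ} (hζ : IsPrimitiveRoot ζ N)
    (d : ℤ) (hd : d.natAbs ≤ 1)
    (hsupp : ∀ k : ℤ, K ≤ k.natAbs → c k = 0) :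
    ∑ n ∈ Finset.range N, ζ ^ (d * (n:ℤ)) *
      ⟪∑ j ∈ Finset.Icc (-(K:ℤ)) K, ((c j : ℂ) * ζ ^ (j * (n:ℤ))) • v j,
       ∑ k ∈ Finset.Icc (-(K:ℤ)) K, ((c k : ℂ) * ζ ^ (k * (n:ℤ))) • w k⟫_ℂ
    = (N : ℂ) * ∑ k ∈ Finset.Icc (-(K:ℤ)) K,
        (c k : ℂ) * (c (k + d) : ℂ) * ⟪v (k + d), w k⟫_ℂ := by
  have hN0 : N ≠ 0 := by omega
  have hζ0 : ζ ≠ 0 := by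
    intro h0
    have := hζ.pow_eq_one
    rw [h0, zero_pow hN0] at this
    exact zero_ne_one this
  have hζnorm : ‖ζ‖ = 1 := by
    have h1 : ‖ζ‖ ^ N = 1 := by
      rw [← norm_pow, hζ.pow_eq_one, norm_one]
    rcases (pow_eq_one_iff_cases).mp h1 with h | h | h
    · omega
    · exact h
    · exfalso; have := norm_nonneg ζ; rw [h.1] at this; linarith
  have hconj : ∀ m : ℤ, (starRingEnd ℂ) (ζ ^ m) = ζ ^ (-m) := by
    intro m
    rw [map_zpow₀, ← Complex.inv_eq_conj hζnorm, inv_zpow, ← zpow_neg]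
  set s : Finset ℤ := Finset.Icc (-(K:ℤ)) K with hs
  -- step 1: expand the inner product
  have step1 : ∀ n : ℕ, ζ ^ (d * (n:ℤ)) *
      ⟪∑ j ∈ s, ((c j : ℂ) * ζ ^ (j * (n:ℤ))) • v j,
       ∑ k ∈ s, ((c k : ℂ) * ζ ^ (k * (n:ℤ))) • w k⟫_ℂ
      = ∑ j ∈ s, ∑ k ∈ s,
          (c j : ℂ) * (c k : ℂ) * ⟪v j, w k⟫_ℂ * ζ ^ ((k + d - j) * (n:ℤ)) := by
    intro n
    rw [sum_inner, Finset.mul_sum]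
    refine Finset.sum_congr rfl fun j _ => ?_
    rw [inner_sum, Finset.mul_sum]
    refine Finset.sum_congr rfl fun k _ => ?_
    rw [inner_smul_left, inner_smul_right, map_mul, Complex.conj_ofReal, hconj]
    have hz : ζ ^ (d * (n:ℤ)) * ζ ^ (-(j * (n:ℤ))) * ζ ^ (k * (n:ℤ))
        = ζ ^ ((k + d - j) * (n:ℤ)) := by
      rw [← zpow_add₀ hζ0, ← zpow_add₀ hζ0]
      congr 1
      ring
    rw [← hz]
    ring
  calc ∑ n ∈ Finset.range N, ζ ^ (d * (n:ℤ)) *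
      ⟪∑ j ∈ s, ((c j : ℂ) * ζ ^ (j * (n:ℤ))) • v j,
       ∑ k ∈ s, ((c k : ℂ) * ζ ^ (k * (n:ℤ))) • w k⟫_ℂ
      = ∑ n ∈ Finset.range N, ∑ j ∈ s, ∑ k ∈ s,
          (c j : ℂ) * (c k : ℂ) * ⟪v j, w k⟫_ℂ * ζ ^ ((k + d - j) * (n:ℤ)) := by
        exact Finset.sum_congr rfl fun n _ => step1 n
    _ = ∑ j ∈ s, ∑ k ∈ s, ∑ n ∈ Finset.range N,
          (c j : ℂ) * (c k : ℂ) * ⟪v j, w k⟫_ℂ * ζ ^ ((k + d - j) * (n:ℤ)) := by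
        rw [Finset.sum_comm]
        exact Finset.sum_congr rfl fun j _ => Finset.sum_comm
    _ = ∑ k ∈ s, ∑ j ∈ s,
          (c j : ℂ) * (c k : ℂ) * ⟪v j, w k⟫_ℂ * (if (k + d - j) = 0 then (N:ℂ) else 0) := by
        rw [Finset.sum_comm]
        refine Finset.sum_congr rfl fun k hk => Finset.sum_congr rfl fun j hj => ?_
        rw [← Finset.mul_sum, orth_sum hζ]
        have hjm := Finset.mem_Icc.mp hj
        have hkm := Finset.mem_Icc.mp hk
        omega
    _ = ∑ k ∈ s, ∑ j ∈ s,
          (if j = k + d then (N:ℂ) * ((c j : ℂ) * (c k : ℂ) * ⟪v j, w k⟫_ℂ) else 0) := by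
        refine Finset.sum_congr rfl fun k _ => Finset.sum_congr rfl fun j _ => ?_
        by_cases hcase : j = k + d
        · rw [if_pos hcase, if_pos (by omega)]
          ring
        · rw [if_neg hcase, if_neg (by omega), mul_zero]
    _ = ∑ k ∈ s, (if k + d ∈ s then
          (N:ℂ) * ((c (k + d) : ℂ) * (c k : ℂ) * ⟪v (k + d), w k⟫_ℂ) else 0) := by
        refine Finset.sum_congr rfl fun k _ => ?_
        exact Finset.sum_ite_eq' s (k + d) _
    _ = ∑ k ∈ s, (N : ℂ) * ((c k : ℂ) * (c (k + d) : ℂ) * ⟪v (k + d), w k⟫_ℂ) := by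
        refine Finset.sum_congr rfl fun k hk => ?_
        by_cases hcase : k + d ∈ s
        · rw [if_pos hcase]; ring
        · rw [if_neg hcase]
          have hc0 : c (k + d) = 0 := by
            apply hsupp
            rw [hs, Finset.mem_Icc] at hcase
            omega
          rw [hc0]
          push_cast
          ring
    _ = (N : ℂ) * ∑ k ∈ s, (c k : ℂ) * (c (k + d) : ℂ) * ⟪v (k + d), w k⟫_ℂ := by
        rw [Finset.mul_sum]

private lemma avg_ineq (T : H →L[ℂ] H)
    (nrT : ∀ x : H, ‖(⟪x, T x⟫_ℂ)‖ ≤ ‖x‖ ^ 2)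
    (v : ℤ → H) (c : ℤ → ℝ) (K : ℕ)
    (hsupp : ∀ k : ℤ, K ≤ k.natAbs → c k = 0)
    (d : ℤ) (hd : d.natAbs ≤ 1)
    (hTv : ∀ k, T (v k) = v (k + d)) :
    ∑ k ∈ Finset.Icc (-(K:ℤ)) K, c k * c (k + d) * ‖v (k + d)‖ ^ 2 ≤
      ∑ k ∈ Finset.Icc (-(K:ℤ)) K, (c k) ^ 2 * ‖v k‖ ^ 2 := by
  set N : ℕ := 2 * K + 2 with hNdef
  have hN0 : N ≠ 0 := by omega
  set ζ : ℂ := Complex.exp (2 * Real.pi * Complex.I / N) with hζdef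
  have hζ : IsPrimitiveRoot ζ N := Complex.isPrimitiveRoot_exp N hN0
  have hζnorm : ‖ζ‖ = 1 := by
    have h1 : ‖ζ‖ ^ N = 1 := by rw [← norm_pow, hζ.pow_eq_one, norm_one]
    rcases (pow_eq_one_iff_cases).mp h1 with h | h | h
    · omega
    · exact h
    · exfalso; have := norm_nonneg ζ; rw [h.1] at this; linarith
  set s : Finset ℤ := Finset.Icc (-(K:ℤ)) K with hs
  set x : ℕ → H := fun n => ∑ k ∈ s, ((c k : ℂ) * ζ ^ (k * (n:ℤ))) • v k with hx
  have hTx : ∀ n : ℕ, T (x n) = ∑ k ∈ s, ((c k : ℂ) * ζ ^ (k * (n:ℤ))) • v (k + d) := by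
    intro n
    rw [hx]
    simp only [map_sum, ContinuousLinearMap.map_smul]
    exact Finset.sum_congr rfl fun k _ => by rw [hTv]
  have E1 : ∑ n ∈ Finset.range N, ζ ^ (d * (n:ℤ)) * ⟪x n, T (x n)⟫_ℂ
      = (N : ℂ) * ∑ k ∈ s, (c k : ℂ) * (c (k + d) : ℂ) * ⟪v (k + d), v (k + d)⟫_ℂ := by
    have := diag_sum v (fun k => v (k + d)) c K N (le_refl N) hζ d hd hsupp
    simp only [← hs] at this
    rw [← this]
    exact Finset.sum_congr rfl fun n _ => by rw [hTx n]
  have E0 : ∑ n ∈ Finset.range N, ⟪x n, x n⟫_ℂ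
      = (N : ℂ) * ∑ k ∈ s, (c k : ℂ) * (c k : ℂ) * ⟪v k, v k⟫_ℂ := by
    have := diag_sum v v c K N (le_refl N) hζ 0 (by simp) hsupp
    simp only [← hs, add_zero, zero_mul, zpow_zero, one_mul] at this
    exact this
  have hre : ∀ y : H, ⟪y, y⟫_ℂ = ((‖y‖^2 : ℝ) : ℂ) := fun y => by
    rw [inner_self_eq_norm_sq_to_K]; norm_num
  -- convert to real statements
  have E1r : (N : ℝ) * ∑ k ∈ s, c k * c (k + d) * ‖v (k + d)‖ ^ 2
      = (∑ n ∈ Finset.range N, ζ ^ (d * (n:ℤ)) * ⟪x n, T (x n)⟫_ℂ).re := by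
    rw [E1]
    have : ∑ k ∈ s, (c k : ℂ) * (c (k + d) : ℂ) * ⟪v (k + d), v (k + d)⟫_ℂ
        = ((∑ k ∈ s, c k * c (k + d) * ‖v (k + d)‖ ^ 2 : ℝ) : ℂ) := by
      push_cast
      refine Finset.sum_congr rfl fun k _ => ?_
      rw [hre]
      push_cast
      ring
    rw [this, ← Complex.ofReal_natCast, ← Complex.ofReal_mul, Complex.ofReal_re]
  have E0r : (N : ℝ) * ∑ k ∈ s, (c k) ^ 2 * ‖v k‖ ^ 2
      = (∑ n ∈ Finset.range N, ⟪x n, x n⟫_ℂ).re := by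
    rw [E0]
    have : ∑ k ∈ s, (c k : ℂ) * (c k : ℂ) * ⟪v k, v k⟫_ℂ
        = ((∑ k ∈ s, (c k) ^ 2 * ‖v k‖ ^ 2 : ℝ) : ℂ) := by
      push_cast
      refine Finset.sum_congr rfl fun k _ => ?_
      rw [hre]
      push_cast
      ring
    rw [this, ← Complex.ofReal_natCast, ← Complex.ofReal_mul, Complex.ofReal_re]
  have hbound : (∑ n ∈ Finset.range N, ζ ^ (d * (n:ℤ)) * ⟪x n, T (x n)⟫_ℂ).re
      ≤ (∑ n ∈ Finset.range N, ⟪x n, x n⟫_ℂ).re := by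
    rw [Complex.re_sum, Complex.re_sum]
    refine Finset.sum_le_sum fun n _ => ?_
    have h1 : (ζ ^ (d * (n:ℤ)) * ⟪x n, T (x n)⟫_ℂ).re
        ≤ ‖ζ ^ (d * (n:ℤ)) * ⟪x n, T (x n)⟫_ℂ‖ := by
      exact Complex.re_le_norm _
    have h2 : ‖ζ ^ (d * (n:ℤ)) * ⟪x n, T (x n)⟫_ℂ‖ = ‖⟪x n, T (x n)⟫_ℂ‖ := by
      rw [norm_mul, norm_zpow, hζnorm, one_zpow, one_mul]
    have h3 : ‖⟪x n, T (x n)⟫_ℂ‖ ≤ ‖x n‖ ^ 2 := nrT (x n)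
    have h4 : (⟪x n, x n⟫_ℂ).re = ‖x n‖ ^ 2 := by
      rw [hre, Complex.ofReal_re]
    linarith
  rw [← E1r, ← E0r] at hbound
  have hNpos : (0:ℝ) < N := by positivity
  exact le_of_mul_le_mul_left hbound hNpos

private lemma nr_le_one {ρ a t : ℝ} (hρ1 : 1 ≤ ρ) (hρ2 : ρ ≤ 2)
    (ha : 0 ≤ a) (hat : a ≤ t)
    (hE : (1 - 1/ρ) * a + Real.sqrt ((1 - 1/ρ)^2 * a^2 + (2/ρ - 1) * t^2) ≤ 1) :
    a ≤ 1 := by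
  have hρ0 : 0 < ρ := by linarith
  have hβ : 0 ≤ 1 - 1/ρ := by
    rw [sub_nonneg, div_le_one hρ0]; linarith
  have hγ : 0 ≤ 2/ρ - 1 := by
    rw [sub_nonneg, le_div_iff₀ hρ0]; linarith
  have h2 : 0 ≤ (1 - 1/ρ)^2 * a^2 + (2/ρ - 1) * t^2 := by positivity
  have hsq : (2/ρ - 1) * t^2 + 2 * ((1 - 1/ρ) * a) ≤ 1 := by
    nlinarith [Real.sq_sqrt h2, Real.sqrt_nonneg ((1 - 1/ρ)^2 * a^2 + (2/ρ - 1) * t^2),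
      mul_nonneg hβ ha]
  have hsum : (2/ρ - 1) + 2 * (1 - 1/ρ) = 1 := by ring
  nlinarith [mul_le_mul_of_nonneg_left (mul_self_le_mul_self ha hat) hγ,
    mul_nonneg hβ ha, mul_nonneg hγ ha, sq_nonneg a]

private lemma nr_all (T : H →L[ℂ] H)
    (hT : ∀ h : H, ‖h‖ = 1 → ‖(⟪h, T h⟫_ℂ)‖ ≤ 1) :
    ∀ x : H, ‖(⟪x, T x⟫_ℂ)‖ ≤ ‖x‖ ^ 2 := by
  intro x
  rcases eq_or_ne x 0 with rfl | hx
  · simp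
  · have hn : (0:ℝ) < ‖x‖ := norm_pos_iff.mpr hx
    set g : H := (‖x‖ : ℂ)⁻¹ • x with hg
    have hg1 : ‖g‖ = 1 := by
      rw [hg, norm_smul, norm_inv, Complex.norm_real, Real.norm_eq_abs,
        abs_of_pos hn, inv_mul_cancel₀ hn.ne']
    have hxg : x = (‖x‖ : ℂ) • g := by
      rw [hg, smul_smul, mul_inv_cancel₀ (by exact_mod_cast hn.ne' : (‖x‖:ℂ) ≠ 0), one_smul]
    have hinner : ⟪x, T x⟫_ℂ = (starRingEnd ℂ) ((‖x‖:ℂ)) * ((‖x‖:ℂ) * ⟪g, T g⟫_ℂ) := by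
      conv_lhs => rw [hxg]
      rw [map_smul, inner_smul_left, inner_smul_right]
    rw [hinner, norm_mul, norm_mul, RCLike.norm_conj]
    have hcn : ‖((‖x‖:ℝ):ℂ)‖ = ‖x‖ := by
      rw [Complex.norm_real, Real.norm_eq_abs, abs_of_pos hn]
    rw [hcn]
    have := hT g hg1
    nlinarith [norm_nonneg (⟪g, T g⟫_ℂ)]

private lemma lip_minmax (a b : ℝ) : |min 1 (max 0 a) - min 1 (max 0 b)| ≤ |a - b| := by
  rw [min_def, min_def, max_def, max_def]
  split_ifs <;>
    (rw [abs_le]; constructor <;>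
      nlinarith [le_abs_self (a-b), neg_abs_le (a-b)])

private lemma sum_shift (φ : ℤ → ℝ) (a b e : ℤ) :
    ∑ k ∈ Finset.Icc (a + e) (b + e), φ k = ∑ k ∈ Finset.Icc a b, φ (k + e) := by
  rw [← Finset.map_add_right_Icc, Finset.sum_map]
  rfl


set_option maxHeartbeats 1000000 in
private lemma isom (A B : H →L[ℂ] H) (hAB : A * B = 1) (hBA : B * A = 1)
    (nrA : ∀ x : H, ‖(⟪x, A x⟫_ℂ)‖ ≤ ‖x‖ ^ 2)
    (nrB : ∀ x : H, ‖(⟪x, B x⟫_ℂ)‖ ≤ ‖x‖ ^ 2)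
    (h : H) (hh : ‖h‖ = 1) : ‖A h‖ = 1 := by
  obtain ⟨v, hv0, hvA, hvB, hvpos⟩ :
      ∃ v : ℤ → H, v 0 = h ∧ (∀ n : ℤ, A (v n) = v (n + 1)) ∧
        (∀ n : ℤ, B (v n) = v (n + (-1))) ∧ (∀ n : ℤ, 0 < ‖v n‖) := by
    refine ⟨fun n => (((⟨A, B, hAB, hBA⟩ : (H →L[ℂ] H)ˣ) ^ n :
      (H →L[ℂ] H)ˣ) : H →L[ℂ] H) h, ?_, ?_, ?_, ?_⟩
    · dsimp only
      rw [zpow_zero, Units.val_one, ContinuousLinearMap.one_apply]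
    · intro n
      dsimp only
      rw [show n + 1 = 1 + n by ring, zpow_add, zpow_one, Units.val_mul,
        ContinuousLinearMap.mul_apply]
    · intro n
      dsimp only
      rw [show n + (-1) = (-1) + n by ring, zpow_add, zpow_neg_one, Units.val_mul,
        ContinuousLinearMap.mul_apply]
      rfl
    · intro n
      dsimp only
      rw [norm_pos_iff]
      intro h0
      set uA : (H →L[ℂ] H)ˣ := ⟨A, B, hAB, hBA⟩ with huA
      have h1 : ((uA ^ (-n) : (H →L[ℂ] H)ˣ) : H →L[ℂ] H)
          (((uA ^ n : (H →L[ℂ] H)ˣ) : H →L[ℂ] H) h) = h := by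
        rw [← ContinuousLinearMap.mul_apply, ← Units.val_mul, ← zpow_add,
          neg_add_cancel, zpow_zero, Units.val_one, ContinuousLinearMap.one_apply]
      rw [h0, map_zero] at h1
      rw [← h1, norm_zero] at hh
      norm_num at hh
  set t : ℝ := ‖A h‖ with ht
  have htv : ‖v 1‖ = t := by
    rw [ht, ← hv0, hvA 0]
    norm_num
  have htpos : 0 < t := htv ▸ hvpos 1
  have key : ∀ M : ℕ, 1 ≤ M → t + t⁻¹ - 2 ≤ 7 / M := by
    intro M hM
    set K : ℕ := 2 * M with hK
    have hMR : (0:ℝ) < M := by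
      have : 0 < M := by omega
      exact_mod_cast this
    have hM1R : (1:ℝ) ≤ M := by exact_mod_cast hM
    obtain ⟨u, hu0, huzero, hu01, hu11, hulip⟩ :
        ∃ u : ℤ → ℝ, (∀ k, 0 ≤ u k) ∧ (∀ k : ℤ, K ≤ k.natAbs → u k = 0) ∧
          u 0 = 1 ∧ u 1 = 1 ∧ (∀ k : ℤ, (u k - u (k+1))^2 ≤ (1/M)^2) := by
      refine ⟨fun k => min 1 (max 0 ((2*(M:ℝ) - (k.natAbs : ℝ)) / M)), ?_, ?_, ?_, ?_, ?_⟩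
      · intro k
        exact le_min zero_le_one (le_max_left 0 _)
      · intro k hk
        have hle : (2*(M:ℝ) - (k.natAbs:ℝ)) / M ≤ 0 := by
          apply div_nonpos_of_nonpos_of_nonneg _ hMR.le
          have h2 : (2*M:ℝ) ≤ (k.natAbs:ℝ) := by
            exact_mod_cast (by omega : 2*M ≤ k.natAbs)
          linarith
        simp only [max_eq_left hle]
        exact min_eq_right zero_le_one
      · simp only [Int.natAbs_zero, Nat.cast_zero, sub_zero]
        rw [min_eq_left]
        apply le_max_of_le_right
        rw [le_div_iff₀ hMR]
        linarith
      · simp only [Int.natAbs_one, Nat.cast_one]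
        rw [min_eq_left]
        apply le_max_of_le_right
        rw [le_div_iff₀ hMR]
        linarith
      · intro k
        have h1 : |min 1 (max 0 ((2*(M:ℝ) - ((k).natAbs : ℝ)) / M))
            - min 1 (max 0 ((2*(M:ℝ) - (((k+1)).natAbs : ℝ)) / M))| ≤ 1/M := by
          refine le_trans (lip_minmax _ _) ?_
          have heq : |(2*(M:ℝ) - ((k).natAbs:ℝ))/M - (2*(M:ℝ) - (((k+1)).natAbs:ℝ))/M|
              = |((k+1).natAbs:ℝ) - ((k).natAbs:ℝ)| / M := by
            rw [div_sub_div_same, abs_div, abs_of_pos hMR]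
            congr 1
            congr 1
            ring
          rw [heq]
          have ha : ((k+1).natAbs : ℝ) ≤ (k.natAbs : ℝ) + 1 := by
            exact_mod_cast (by omega : (k+1).natAbs ≤ k.natAbs + 1)
          have hb : (k.natAbs : ℝ) ≤ ((k+1).natAbs : ℝ) + 1 := by
            exact_mod_cast (by omega : k.natAbs ≤ (k+1).natAbs + 1)
          gcongr
          rw [abs_le]
          constructor <;> linarith
        calc (min 1 (max 0 ((2*(M:ℝ) - ((k).natAbs : ℝ)) / M))
              - min 1 (max 0 ((2*(M:ℝ) - (((k+1)).natAbs : ℝ)) / M)))^2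
            = |min 1 (max 0 ((2*(M:ℝ) - ((k).natAbs : ℝ)) / M))
              - min 1 (max 0 ((2*(M:ℝ) - (((k+1)).natAbs : ℝ)) / M))|^2 := (sq_abs _).symm
          _ ≤ (1/M)^2 := by
              exact pow_le_pow_left₀ (abs_nonneg _) h1 2
    set c : ℤ → ℝ := fun k => u k / ‖v k‖ with hc
    have hcsupp : ∀ k : ℤ, K ≤ k.natAbs → c k = 0 := by
      intro k hk; simp only [hc, huzero k hk, zero_div]
    have IA := avg_ineq A nrA v c K hcsupp 1 (by decide) (fun k => hvA k)
    have IB := avg_ineq B nrB v c K hcsupp (-1) (by decide) (fun k => hvB k)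
    set s : Finset ℤ := Finset.Icc (-(K:ℤ)) K with hs
    set f : ℤ → ℝ := fun k => u k * u (k+1) * (‖v (k+1)‖ / ‖v k‖) with hf
    set g : ℤ → ℝ := fun k => u k * u (k+1) * (‖v k‖ / ‖v (k+1)‖) with hg
    have IA' : ∑ k ∈ s, f k ≤ ∑ k ∈ s, (u k)^2 := by
      have e1 : ∀ k : ℤ, c k * c (k + 1) * ‖v (k + 1)‖ ^ 2 = f k := by
        intro k
        simp only [hc, hf]
        have p1 := (hvpos k).ne'
        have p2 := (hvpos (k+1)).ne'
        field_simp
      have e2 : ∀ k : ℤ, (c k)^2 * ‖v k‖^2 = (u k)^2 := by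
        intro k
        simp only [hc]
        have p1 := (hvpos k).ne'
        field_simp
      calc ∑ k ∈ s, f k = ∑ k ∈ s, c k * c (k+1) * ‖v (k+1)‖^2 :=
            Finset.sum_congr rfl fun k _ => (e1 k).symm
        _ ≤ ∑ k ∈ s, (c k)^2 * ‖v k‖^2 := IA
        _ = ∑ k ∈ s, (u k)^2 := Finset.sum_congr rfl fun k _ => e2 k
    have IB' : ∑ k ∈ s, g (k + (-1)) ≤ ∑ k ∈ s, (u k)^2 := by
      have e1 : ∀ k : ℤ, c k * c (k + (-1)) * ‖v (k + (-1))‖ ^ 2 = g (k + (-1)) := by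
        intro k
        have hk1 : k + (-1) + 1 = k := by ring
        simp only [hc, hg, hk1]
        have p1 := (hvpos k).ne'
        have p2 := (hvpos (k + (-1))).ne'
        field_simp
      have e2 : ∀ k : ℤ, (c k)^2 * ‖v k‖^2 = (u k)^2 := by
        intro k
        simp only [hc]
        have p1 := (hvpos k).ne'
        field_simp
      calc ∑ k ∈ s, g (k + (-1)) = ∑ k ∈ s, c k * c (k+(-1)) * ‖v (k+(-1))‖^2 :=
            Finset.sum_congr rfl fun k _ => (e1 k).symm
        _ ≤ ∑ k ∈ s, (c k)^2 * ‖v k‖^2 := IB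
        _ = ∑ k ∈ s, (u k)^2 := Finset.sum_congr rfl fun k _ => e2 k
    have hgK : g (K:ℤ) = 0 := by
      have : u (K:ℤ) = 0 := huzero _ (by simp)
      simp only [hg, this, zero_mul]
    have hgKm : g (-(K:ℤ) + (-1)) = 0 := by
      have : u (-(K:ℤ) + (-1)) = 0 := huzero _ (by omega)
      simp only [hg, this, zero_mul]
    have hshift : ∑ k ∈ s, g (k + (-1)) = ∑ k ∈ Finset.Icc (-(K:ℤ) + (-1)) ((K:ℤ) + (-1)), g k :=
      (sum_shift g _ _ _).symm
    have hsub1 : ∑ k ∈ Finset.Icc (-(K:ℤ) + (-1)) ((K:ℤ) + (-1)), g k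
        = ∑ k ∈ Finset.Icc (-(K:ℤ) + (-1)) (K:ℤ), g k := by
      apply Finset.sum_subset (Finset.Icc_subset_Icc le_rfl (by omega))
      intro x hx hnx
      have hxK : x = (K:ℤ) := by
        rw [Finset.mem_Icc] at hx hnx
        omega
      rw [hxK]; exact hgK
    have hsub2 : ∑ k ∈ s, g k = ∑ k ∈ Finset.Icc (-(K:ℤ) + (-1)) (K:ℤ), g k := by
      apply Finset.sum_subset (Finset.Icc_subset_Icc (by omega) le_rfl)
      intro x hx hnx
      have hxK : x = -(K:ℤ) + (-1) := by
        rw [Finset.mem_Icc] at hx hnx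
        omega
      rw [hxK]; exact hgKm
    have IB'' : ∑ k ∈ s, g k ≤ ∑ k ∈ s, (u k)^2 := by
      rw [hsub2, ← hsub1, ← hshift]; exact IB'
    have husq : ∑ k ∈ s, (u (k+1))^2 = ∑ k ∈ s, (u k)^2 := by
      have h1 : ∑ k ∈ s, (u (k+1))^2
          = ∑ k ∈ Finset.Icc (-(K:ℤ) + 1) ((K:ℤ) + 1), (u k)^2 :=
        (sum_shift (fun k => (u k)^2) _ _ _).symm
      have h2 : ∑ k ∈ Finset.Icc (-(K:ℤ) + 1) ((K:ℤ) + 1), (u k)^2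
          = ∑ k ∈ Finset.Icc (-(K:ℤ)) ((K:ℤ) + 1), (u k)^2 := by
        apply Finset.sum_subset (Finset.Icc_subset_Icc (by omega) le_rfl)
        intro x hx hnx
        have hxK : x = -(K:ℤ) := by
          rw [Finset.mem_Icc] at hx hnx
          omega
        rw [hxK]
        have : u (-(K:ℤ)) = 0 := huzero _ (by omega)
        rw [this]; ring
      have h3 : ∑ k ∈ s, (u k)^2 = ∑ k ∈ Finset.Icc (-(K:ℤ)) ((K:ℤ) + 1), (u k)^2 := by
        apply Finset.sum_subset (Finset.Icc_subset_Icc le_rfl (by omega))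
        intro x hx hnx
        have hxK : x = (K:ℤ) + 1 := by
          rw [Finset.mem_Icc] at hx hnx
          omega
        rw [hxK]
        have : u ((K:ℤ) + 1) = 0 := huzero _ (by omega)
        rw [this]; ring
      rw [h1, h2, ← h3]
    have hcomb : ∑ k ∈ s, (f k + g k) ≤ 2 * ∑ k ∈ s, (u k)^2 := by
      rw [Finset.sum_add_distrib]
      linarith
    have hfg : ∀ k ∈ s, 2 * (u k * u (k+1)) ≤ f k + g k := by
      intro k _
      simp only [hf, hg]
      have p1 := hvpos k
      have p2 := hvpos (k+1)
      have huu := mul_nonneg (hu0 k) (hu0 (k+1))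
      have hsum2 : 2 ≤ ‖v (k+1)‖ / ‖v k‖ + ‖v k‖ / ‖v (k+1)‖ := by
        rw [div_add_div _ _ p1.ne' p2.ne', le_div_iff₀ (mul_pos p1 p2)]
        nlinarith [sq_nonneg (‖v (k+1)‖ - ‖v k‖)]
      nlinarith [mul_le_mul_of_nonneg_left hsum2 huu]
    have hn0 : ‖v 0‖ = 1 := by rw [hv0, hh]
    have hf0 : f 0 = t := by
      have h01 : (0:ℤ) + 1 = 1 := by ring
      simp only [hf, h01, hu01, hu11, hn0, htv, one_mul, div_one]
    have hg0 : g 0 = t⁻¹ := by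
      have h01 : (0:ℤ) + 1 = 1 := by ring
      simp only [hg, h01, hu01, hu11, hn0, htv, one_mul, one_div]
    have hpick : t + t⁻¹ - 2 ≤ ∑ k ∈ s, (f k + g k - 2 * (u k * u (k+1))) := by
      have h0s : (0:ℤ) ∈ s := by
        rw [hs, Finset.mem_Icc]
        constructor <;> omega
      have hval : f 0 + g 0 - 2 * (u 0 * u 1) = t + t⁻¹ - 2 := by
        rw [hf0, hg0, hu01, hu11]
        ring
      rw [← hval]
      exact Finset.single_le_sum (f := fun k => f k + g k - 2 * (u k * u (k+1)))
        (fun k hk => by linarith [hfg k hk]) h0s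
    have hexp : ∑ k ∈ s, (f k + g k - 2 * (u k * u (k+1)))
        = ∑ k ∈ s, (f k + g k) - 2 * ∑ k ∈ s, (u k * u (k+1)) := by
      rw [Finset.sum_sub_distrib, Finset.mul_sum]
    have hsq2 : 2 * ∑ k ∈ s, (u k)^2 - 2 * ∑ k ∈ s, (u k * u (k+1))
        = ∑ k ∈ s, (u k - u (k+1))^2 := by
      have hexpand : ∑ k ∈ s, (u k - u (k+1))^2
          = ∑ k ∈ s, ((u k)^2 + (u (k+1))^2 - 2 * (u k * u (k+1))) :=
        Finset.sum_congr rfl fun k _ => by ring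
      rw [hexpand, Finset.sum_sub_distrib, Finset.sum_add_distrib, husq, ← Finset.mul_sum]
      ring
    have hcardbound : ∑ k ∈ s, (u k - u (k+1))^2 ≤ 7 / M := by
      have h1 := Finset.sum_le_card_nsmul s (fun k => (u k - u (k+1))^2) ((1/M)^2)
        (fun k _ => hulip k)
      have hcards : (s.card : ℝ) = 2*(K:ℝ) + 1 := by
        rw [hs, Int.card_Icc]
        have htn : ((K:ℤ) + 1 - -(K:ℤ)).toNat = 2*K + 1 := by omega
        rw [htn]
        push_cast
        ring
      rw [nsmul_eq_mul] at h1
      have hKR : (K:ℝ) = 2*(M:ℝ) := by rw [hK]; push_cast; ring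
      have hM2 : (0:ℝ) < (M:ℝ)^2 := by positivity
      have h2 : (s.card : ℝ) * (1/M)^2 ≤ 7 / M := by
        rw [hcards, hKR, div_pow, one_pow, mul_one_div, div_le_div_iff₀ hM2 hMR]
        nlinarith [hM1R, hMR]
      exact le_trans h1 h2
    linarith [hpick, hexp, hcomb, hsq2, hcardbound]
  have hle2 : t + t⁻¹ ≤ 2 := by
    by_contra hcon
    push_neg at hcon
    have hpos : 0 < t + t⁻¹ - 2 := by linarith
    obtain ⟨M, hM⟩ := exists_nat_gt (7 / (t + t⁻¹ - 2))
    have h7 : 0 < 7 / (t + t⁻¹ - 2) := by positivity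
    have hM1 : 1 ≤ M := by
      have : (0:ℝ) < M := lt_trans h7 hM
      exact_mod_cast Nat.one_le_iff_ne_zero.mpr (by exact_mod_cast this.ne' : M ≠ 0)
    have hk := key M hM1
    have hMR : (0:ℝ) < M := by
      have : 0 < M := by omega
      exact_mod_cast this
    have hlt : 7 / (M:ℝ) < t + t⁻¹ - 2 := by
      rw [div_lt_iff₀ hMR]
      rw [div_lt_iff₀ hpos] at hM
      linarith
    linarith
  have htt : t * t⁻¹ = 1 := mul_inv_cancel₀ htpos.ne'
  have hsq1 : (t - 1)^2 ≤ 0 := by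
    nlinarith [mul_le_mul_of_nonneg_left hle2 htpos.le]
  have : t = 1 := by nlinarith [sq_nonneg (t-1)]
  exact this

end AndoLiAux

/-- (Ando–Li) For `1 ≤ ρ ≤ 2`, if `A` is an invertible bounded operator on a complex
Hilbert space with operator ρ-radius `w_ρ(A) ≤ 1` and `w_ρ(A⁻¹) ≤ 1`, then `A` is
unitary. -/
theorem unitary_of_rhoRadius_le_one
    {H : Type*} [NormedAddCommGroup H] [InnerProductSpace ℂ H] [CompleteSpace H]
    (ρ : ℝ) (hρ1 : 1 ≤ ρ) (hρ2 : ρ ≤ 2)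
    (A B : H →L[ℂ] H) (hAB : A * B = 1) (hBA : B * A = 1)
    (hwA : ∀ h : H, ‖h‖ = 1 →
      (1 - 1 / ρ) * ‖(⟪h, A h⟫_ℂ)‖ +
        Real.sqrt ((1 - 1 / ρ) ^ 2 * ‖(⟪h, A h⟫_ℂ)‖ ^ 2 + (2 / ρ - 1) * ‖A h‖ ^ 2) ≤ 1)
    (hwB : ∀ h : H, ‖h‖ = 1 →
      (1 - 1 / ρ) * ‖(⟪h, B h⟫_ℂ)‖ +
        Real.sqrt ((1 - 1 / ρ) ^ 2 * ‖(⟪h, B h⟫_ℂ)‖ ^ 2 + (2 / ρ - 1) * ‖B h‖ ^ 2) ≤ 1) :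
    ContinuousLinearMap.adjoint A * A = 1 ∧ A * ContinuousLinearMap.adjoint A = 1 := by
  have nr1A : ∀ h : H, ‖h‖ = 1 → ‖(⟪h, A h⟫_ℂ)‖ ≤ 1 := by
    intro g hg
    refine nr_le_one hρ1 hρ2 (norm_nonneg _) ?_ (hwA g hg)
    calc ‖(⟪g, A g⟫_ℂ)‖ ≤ ‖g‖ * ‖A g‖ := norm_inner_le_norm _ _
      _ = ‖A g‖ := by rw [hg, one_mul]
  have nr1B : ∀ h : H, ‖h‖ = 1 → ‖(⟪h, B h⟫_ℂ)‖ ≤ 1 := by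
    intro g hg
    refine nr_le_one hρ1 hρ2 (norm_nonneg _) ?_ (hwB g hg)
    calc ‖(⟪g, B g⟫_ℂ)‖ ≤ ‖g‖ * ‖B g‖ := norm_inner_le_norm _ _
      _ = ‖B g‖ := by rw [hg, one_mul]
  have nrA : ∀ x : H, ‖(⟪x, A x⟫_ℂ)‖ ≤ ‖x‖ ^ 2 := nr_all A nr1A
  have nrB : ∀ x : H, ‖(⟪x, B x⟫_ℂ)‖ ≤ ‖x‖ ^ 2 := nr_all B nr1B
  have hisoA : ∀ x : H, ‖A x‖ = ‖x‖ := by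
    intro x
    rcases eq_or_ne x 0 with rfl | hx
    · rw [map_zero]
    · have hn : (0:ℝ) < ‖x‖ := norm_pos_iff.mpr hx
      have h1 : ‖(‖x‖ : ℂ)⁻¹ • x‖ = 1 := by
        rw [norm_smul, norm_inv, Complex.norm_real, Real.norm_eq_abs, abs_of_pos hn,
          inv_mul_cancel₀ hn.ne']
      have h2 := isom A B hAB hBA nrA nrB _ h1
      rw [map_smul, norm_smul, norm_inv, Complex.norm_real, Real.norm_eq_abs,
        abs_of_pos hn] at h2
      field_simp at h2
      rw [h2]
  have hAdj : ContinuousLinearMap.adjoint A * A = 1 := by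
    have hz : ∀ x : H, ⟪((ContinuousLinearMap.adjoint A * A - 1 : H →L[ℂ] H) :
        H →ₗ[ℂ] H) x, x⟫_ℂ = 0 := by
      intro x
      have hxx : ((ContinuousLinearMap.adjoint A * A - 1 : H →L[ℂ] H) :
          H →ₗ[ℂ] H) x = ContinuousLinearMap.adjoint A (A x) - x := by
        rfl
      rw [hxx, inner_sub_left, ContinuousLinearMap.adjoint_inner_left,
        inner_self_eq_norm_sq_to_K, inner_self_eq_norm_sq_to_K, hisoA x, sub_self]
    have h0 := (inner_map_self_eq_zero _).mp hz
    have h0' : (ContinuousLinearMap.adjoint A * A - 1 : H →L[ℂ] H) = 0 := by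
      apply ContinuousLinearMap.coe_injective
      rw [h0]
      rfl
    have := sub_eq_zero.mp h0'
    exact this
  refine ⟨hAdj, ?_⟩
  have hBeq : ContinuousLinearMap.adjoint A = B := by
    calc ContinuousLinearMap.adjoint A = ContinuousLinearMap.adjoint A * 1 := (mul_one _).symm
      _ = ContinuousLinearMap.adjoint A * (A * B) := by rw [hAB]
      _ = (ContinuousLinearMap.adjoint A * A) * B := (mul_assoc _ _ _).symm
      _ = 1 * B := by rw [hAdj]
      _ = B := one_mul B
  rw [hBeq, hAB]
end

section
/- Let H be a complex Hilbert space, let A be an invertible bounded linear operator on H, and set M = ½(A + (A*)⁻¹). Then M*M − I = ¼(A*A + (A*A)⁻¹ − 2I) is a positive (nonnegative self-adjoint) operator; in particular ‖Mu‖ ≥ ‖u‖ for every u ∈ H, so M is bounded below and ‖M⁻¹‖ ≤ 1 whenever M is invertible. -/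
open scoped InnerProductSpace
open ContinuousLinearMap

set_option maxHeartbeats 1000000 in
/-- For an invertible bounded operator `A` on a complex Hilbert space and
`M = ½(A + (A*)⁻¹)`, the operator `M*M − 1` equals `¼(A*A + (A*A)⁻¹ − 2)` and is
positive; in particular `‖Mu‖ ≥ ‖u‖` for all `u`, and any inverse of `M` is a
contraction. -/
theorem isPositive_adjoint_mul_sub_one
    {H : Type*} [NormedAddCommGroup H] [InnerProductSpace ℂ H] [CompleteSpace H]
    (A B : H →L[ℂ] H) (hAB : A * B = 1) (hBA : B * A = 1)
    (M : H →L[ℂ] H) (hM : M = (2 : ℂ)⁻¹ • (A + adjoint B)) :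
    adjoint M * M - 1 = (4 : ℂ)⁻¹ • (adjoint A * A + B * adjoint B - 2) ∧
    (adjoint M * M - 1).IsPositive ∧
    (∀ u : H, ‖u‖ ≤ ‖M u‖) ∧
    (∀ N : H →L[ℂ] H, M * N = 1 → N * M = 1 → ‖N‖ ≤ 1) := by
  have hadjM : adjoint M = (2 : ℂ)⁻¹ • (adjoint A + B) := by
    simp only [hM, ← star_eq_adjoint, star_smul, star_add, star_star]
    norm_num
  have hABadj : adjoint A * adjoint B = 1 := by
    rw [← star_eq_adjoint, ← star_eq_adjoint, ← star_mul, hBA, star_one]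
  have h2 : (2 : H →L[ℂ] H) = (2 : ℂ) • 1 := by
    ext x
    simp [two_smul]
  have heq : adjoint M * M - 1 = (4 : ℂ)⁻¹ • (adjoint A * A + B * adjoint B - 2) := by
    rw [hadjM, hM, smul_mul_smul_comm, add_mul, mul_add, mul_add, hBA, hABadj, h2]
    module
  have hkey : ∀ u : H, ‖u‖ ≤ ‖M u‖ := by
    intro u
    have hBAu : B (A u) = u := by
      have := congrArg (fun T : H →L[ℂ] H => T u) hBA
      simpa using this
    have hre : RCLike.re (⟪A u, adjoint B u⟫_ℂ) = ‖u‖ ^ 2 := by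
      rw [adjoint_inner_right, hBAu, inner_self_eq_norm_sq]
    have hAu : ‖u‖ ^ 2 ≤ ‖A u‖ * ‖adjoint B u‖ := by
      calc ‖u‖ ^ 2 = RCLike.re (⟪A u, adjoint B u⟫_ℂ) := hre.symm
        _ ≤ ‖⟪A u, adjoint B u⟫_ℂ‖ := RCLike.re_le_norm _
        _ ≤ ‖A u‖ * ‖adjoint B u‖ := norm_inner_le_norm _ _
    have hMu : M u = (2 : ℂ)⁻¹ • (A u + adjoint B u) := by
      rw [hM]; simp
    have hnorm : ‖M u‖ ^ 2 = (4 : ℝ)⁻¹ * ‖A u + adjoint B u‖ ^ 2 := by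
      rw [hMu, norm_smul, mul_pow]
      norm_num
    have hexp : ‖A u + adjoint B u‖ ^ 2
        = ‖A u‖ ^ 2 + 2 * RCLike.re (⟪A u, adjoint B u⟫_ℂ) + ‖adjoint B u‖ ^ 2 :=
      norm_add_sq (𝕜 := ℂ) _ _
    have hsq : ‖u‖ ^ 2 ≤ ‖M u‖ ^ 2 := by
      rw [hnorm, hexp, hre]
      nlinarith [hAu, sq_nonneg (‖A u‖ - ‖adjoint B u‖)]
    nlinarith [hsq, norm_nonneg u, norm_nonneg (M u)]
  refine ⟨heq, ?_, hkey, ?_⟩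
  · constructor
    · have hsa : IsSelfAdjoint (adjoint M * M) := by
        simpa [star_eq_adjoint] using IsSelfAdjoint.star_mul_self M
      exact ContinuousLinearMap.isSelfAdjoint_iff_isSymmetric.mp (hsa.sub (IsSelfAdjoint.one _))
    · intro u
      have h0 : (adjoint M * M - 1) u = adjoint M (M u) - u := by
        rw [ContinuousLinearMap.sub_apply, ContinuousLinearMap.mul_apply,
          ContinuousLinearMap.one_apply]
      have h1 : ⟪(adjoint M * M - 1) u, u⟫_ℂ = ⟪M u, M u⟫_ℂ - ⟪u, u⟫_ℂ := by
        rw [h0, inner_sub_left, adjoint_inner_left]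
      rw [reApplyInnerSelf, h1, map_sub, inner_self_eq_norm_sq, inner_self_eq_norm_sq]
      have := hkey u
      nlinarith [hkey u, norm_nonneg u, norm_nonneg (M u)]
  · intro N hMN hNM
    apply opNorm_le_bound _ zero_le_one
    intro v
    have hv : M (N v) = v := by
      have := congrArg (fun T : H →L[ℂ] H => T v) hMN
      simpa using this
    calc ‖N v‖ ≤ ‖M (N v)‖ := hkey (N v)
      _ = ‖v‖ := by rw [hv]
      _ ≤ 1 * ‖v‖ := by rw [one_mul]
end

section
/- Let H be a complex Hilbert space, let A be an invertible bounded linear operator on H, and set M = ½(A + (A*)⁻¹). Then A*A ≤ ((M*M)^{1/2} + (M*M − I)^{1/2})² in the sense of the order on self-adjoint operators, where C^{1/2} denotes the positive square root of a positive operator C (note M*M − I ≥ 0). -/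
open scoped InnerProductSpace
open ContinuousLinearMap

set_option maxHeartbeats 2000000 in
set_option synthInstance.maxHeartbeats 1000000 in
/-- For an invertible bounded operator `A` on a complex Hilbert space and
`M = ½(A + (A*)⁻¹)`, one has `A*A ≤ ((M*M)^{1/2} + (M*M − 1)^{1/2})²` in the Loewner
order, where the square roots are the positive square roots (note `M*M − 1 ≥ 0`). -/
theorem adjoint_mul_le_sq_sqrt_add_sqrt
    {H : Type*} [NormedAddCommGroup H] [InnerProductSpace ℂ H] [CompleteSpace H]
    (A B : H →L[ℂ] H) (hAB : A * B = 1) (hBA : B * A = 1)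
    (M : H →L[ℂ] H) (hM : M = (2 : ℂ)⁻¹ • (A + adjoint B)) :
    0 ≤ adjoint M * M - 1 ∧
    adjoint A * A ≤ (CFC.sqrt (adjoint M * M) + CFC.sqrt (adjoint M * M - 1)) ^ 2 := by
  -- work with `star` instead of `adjoint`
  simp only [← ContinuousLinearMap.star_eq_adjoint] at hM ⊢
  -- abbreviations
  set P : H →L[ℂ] H := star A * A with hPdef
  set Q : H →L[ℂ] H := B * star B with hQdef
  set m : H →L[ℂ] H := star M * M with hmdef
  -- numeral/scalar bookkeeping
  have h11 : (2 : H →L[ℂ] H) = 1 + 1 := (one_add_one_eq_two).symm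
  have hc2 : (2 : H →L[ℂ] H) = (2 : ℂ) • 1 := by
    rw [Algebra.smul_def, mul_one, map_ofNat]
  have hc4 : ∀ z : H →L[ℂ] H, (4 : ℂ) • z = 4 * z := fun z => by
    rw [Algebra.smul_def, map_ofNat]
  -- basic algebraic relations
  have hSS : star A * star B = 1 := by rw [← star_mul, hBA, star_one]
  have hPQ : P * Q = 1 := by
    rw [hPdef, hQdef, mul_assoc, ← mul_assoc A, hAB, one_mul, ← star_mul, hBA, star_one]
  have hQP : Q * P = 1 := by
    rw [hPdef, hQdef, mul_assoc, ← mul_assoc (star B), ← star_mul, hAB, star_one, one_mul, hBA]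
  have hMstar : star M = (2 : ℂ)⁻¹ • (star A + B) := by
    rw [hM, star_smul, star_add, star_star]
    congr 1
    simp
  have hexp : (star A + B) * (A + star B) = P + Q + 2 := by
    rw [add_mul, mul_add, mul_add, hSS, hBA, hPdef, hQdef, h11]
    abel
  have hmE : m = (4 : ℂ)⁻¹ • (P + Q + 2) := by
    rw [hmdef, hMstar, hM, smul_mul_smul_comm, hexp]
    norm_num
  -- part 1 : 0 ≤ m - 1
  have hsub : m - 1 = star ((2 : ℂ)⁻¹ • (A - star B)) * ((2 : ℂ)⁻¹ • (A - star B)) := by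
    rw [star_smul, star_sub, star_star, smul_mul_smul_comm]
    have hexp2 : (star A - B) * (A - star B) = P + Q - 2 := by
      rw [sub_mul, mul_sub, mul_sub, hSS, hBA, hPdef, hQdef, h11]
      abel
    have : star ((2:ℂ)⁻¹) * (2:ℂ)⁻¹ = (4:ℂ)⁻¹ := by simp; norm_num
    rw [hexp2, this, hmE, hc2]
    module
  have hm1 : 0 ≤ m - 1 := by rw [hsub]; exact star_mul_self_nonneg _
  refine ⟨hm1, ?_⟩
  -- spectra
  have hm0 : 0 ≤ m := star_mul_self_nonneg M
  have hmsa : IsSelfAdjoint m := IsSelfAdjoint.of_nonneg hm0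
  have hm1' : (1 : H →L[ℂ] H) ≤ m := by rwa [← sub_nonneg]
  have hsp0 : ∀ t ∈ spectrum ℝ m, (0:ℝ) ≤ t := fun t ht => spectrum_nonneg_of_nonneg hm0 ht
  have hsp1 : ∀ t ∈ spectrum ℝ m, (1:ℝ) ≤ t := (CFC.one_le_iff (R := ℝ) m).mp hm1'
  -- the three cfc elements
  set S : H →L[ℂ] H := cfc Real.sqrt m with hSdef
  set T : H →L[ℂ] H := cfc (fun t : ℝ => Real.sqrt (t - 1)) m with hTdef
  set U : H →L[ℂ] H := cfc (fun t : ℝ => Real.sqrt t * Real.sqrt (t - 1)) m with hUdef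
  have cS : ContinuousOn Real.sqrt (spectrum ℝ m) := Real.continuous_sqrt.continuousOn
  have cT : ContinuousOn (fun t : ℝ => Real.sqrt (t - 1)) (spectrum ℝ m) :=
    (Real.continuous_sqrt.comp (continuous_sub_right 1)).continuousOn
  have cU : ContinuousOn (fun t : ℝ => Real.sqrt t * Real.sqrt (t - 1)) (spectrum ℝ m) :=
    cS.mul cT
  have hS0 : 0 ≤ S := cfc_nonneg fun t _ => Real.sqrt_nonneg t
  have hT0 : 0 ≤ T := cfc_nonneg fun t _ => Real.sqrt_nonneg (t - 1)
  have hU0 : 0 ≤ U := cfc_nonneg fun t _ => mul_nonneg (Real.sqrt_nonneg _) (Real.sqrt_nonneg _)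
  have hSS' : S * S = m := by
    rw [hSdef, ← cfc_mul _ _ m cS cS]
    exact (cfc_congr fun t ht => Real.mul_self_sqrt (hsp0 t ht)).trans (cfc_id' ℝ m)
  have hTT : T * T = m - 1 := by
    rw [hTdef, ← cfc_mul _ _ m cT cT]
    have : cfc (fun t : ℝ => Real.sqrt (t-1) * Real.sqrt (t-1)) m
        = cfc (fun t : ℝ => t - 1) m :=
      cfc_congr fun t ht => Real.mul_self_sqrt (by linarith [hsp1 t ht])
    rw [this, cfc_sub _ _ m, cfc_id' ℝ m, cfc_const (1:ℝ) m, map_one]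
  have hST : S * T = U := by rw [hSdef, hTdef, hUdef, ← cfc_mul _ _ m cS cT]
  have hTS : T * S = U := by
    rw [hSdef, hTdef, hUdef, ← cfc_mul _ _ m cT cS]
    exact cfc_congr fun t _ => mul_comm _ _
  have hUU : U * U = m * m - m := by
    rw [hUdef, ← cfc_mul _ _ m cU cU]
    have : cfc (fun t : ℝ => (Real.sqrt t * Real.sqrt (t-1)) * (Real.sqrt t * Real.sqrt (t-1))) m
        = cfc (fun t : ℝ => t * t - t) m := by
      refine cfc_congr fun t ht => ?_
      have h0 := hsp0 t ht
      have h1 := hsp1 t ht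
      rw [show (Real.sqrt t * Real.sqrt (t-1)) * (Real.sqrt t * Real.sqrt (t-1))
          = (Real.sqrt t * Real.sqrt t) * (Real.sqrt (t-1) * Real.sqrt (t-1)) from by ring,
        Real.mul_self_sqrt h0, Real.mul_self_sqrt (by linarith)]
      ring
    rw [this, cfc_sub _ _ m, cfc_mul _ _ m, cfc_id' ℝ m]
  have hsqS : CFC.sqrt m = S := CFC.sqrt_unique hSS'
  have hsqT : CFC.sqrt (m - 1) = T := CFC.sqrt_unique hTT
  -- the key selfadjoint element X
  set X : H →L[ℂ] H := (2 : ℂ)⁻¹ • (P - Q) with hXdef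
  have hPsa : IsSelfAdjoint P := by rw [hPdef, IsSelfAdjoint, star_mul, star_star]
  have hQsa : IsSelfAdjoint Q := by rw [hQdef, IsSelfAdjoint, star_mul, star_star]
  have hXsa : IsSelfAdjoint X := by
    rw [hXdef, IsSelfAdjoint, star_smul, star_sub, hPsa.star_eq, hQsa.star_eq]
    congr 1
    simp
  -- (2U)² = X²
  have hEE : (P + Q + 2) * (P + Q + 2) - 4 * (P + Q + 2) = P * P + Q * Q - 2 := by
    have : (P + Q + 2) * (P + Q + 2)
        = P*P + P*Q + P*2 + (Q*P + Q*Q + Q*2) + (2*P + 2*Q + 2*2) := by noncomm_ring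
    rw [this, hPQ, hQP, h11]
    noncomm_ring
  have h2U : (2 * U) * (2 * U) = X * X := by
    have hUs : 2 * U = (2:ℂ) • U := by rw [hc2, smul_mul_assoc, one_mul]
    rw [hUs, smul_mul_smul_comm, hUU, hXdef, smul_mul_smul_comm]
    have hXX : (P - Q) * (P - Q) = P*P + Q*Q - 2 := by
      rw [sub_mul, mul_sub, mul_sub, hPQ, hQP, h11]
      noncomm_ring
    rw [hXX, ← hEE, hmE, smul_mul_smul_comm, ← hc4]
    module
  -- X ≤ 2U via x ≤ √(x²)
  have key : ∀ x : H →L[ℂ] H, IsSelfAdjoint x → x ≤ CFC.sqrt (x ^ 2) := by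
    intro x hx
    have h1 : CFC.sqrt (x ^ 2) = x⁺ + x⁻ := by
      apply CFC.sqrt_unique
      · rw [mul_add, add_mul, add_mul, CFC.posPart_mul_negPart, CFC.negPart_mul_posPart,
          add_zero, zero_add, pow_two]
        conv_rhs => rw [← CFC.posPart_sub_negPart x hx]
        rw [mul_sub, sub_mul, sub_mul, CFC.posPart_mul_negPart, CFC.negPart_mul_posPart]
        abel
      · exact add_nonneg (CFC.posPart_nonneg x) (CFC.negPart_nonneg x)
    rw [h1]
    calc x = x⁺ - x⁻ := (CFC.posPart_sub_negPart x hx).symm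
      _ ≤ x⁺ := sub_le_self _ (CFC.negPart_nonneg x)
      _ ≤ x⁺ + x⁻ := le_add_of_nonneg_right (CFC.negPart_nonneg x)
  have hsqX : CFC.sqrt (X ^ 2) = 2 * U := by
    refine CFC.sqrt_unique ?_ ?_
    · rw [pow_two]; exact h2U
    · rw [two_mul]; exact add_nonneg hU0 hU0
  have hXle : X ≤ 2 * U := hsqX ▸ key X hXsa
  -- conclude
  rw [hsqS, hsqT, pow_two, add_mul, mul_add, mul_add, hSS', hTT, hST, hTS, ← sub_nonneg]
  have hlin : m + U + (U + (m - 1)) - P = 2 * U - X := by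
    have hUs : 2 * U = (2:ℂ) • U := by rw [hc2, smul_mul_assoc, one_mul]
    rw [hUs, hXdef, hmE, hc2]
    module
  rw [hlin]
  exact sub_nonneg.mpr hXle
end

section
/- Let H be a complex Hilbert space, let A be an invertible bounded linear operator on H, and set M = ½(A + (A*)⁻¹). Then ‖M‖ ≥ 1 and ‖A‖ ≤ ‖M‖ + √(‖M‖² − 1). -/
open scoped InnerProductSpace
open ContinuousLinearMap

/-- For an invertible bounded operator `A` on a nonzero complex Hilbert space and
`M = ½(A + (A*)⁻¹)`, one has `‖M‖ ≥ 1` and `‖A‖ ≤ ‖M‖ + √(‖M‖² − 1)`. -/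
theorem norm_le_norm_add_sqrt
    {H : Type*} [NormedAddCommGroup H] [InnerProductSpace ℂ H] [CompleteSpace H]
    [Nontrivial H]
    (A B : H →L[ℂ] H) (hAB : A * B = 1) (hBA : B * A = 1)
    (M : H →L[ℂ] H) (hM : M = (2 : ℂ)⁻¹ • (A + adjoint B)) :
    1 ≤ ‖M‖ ∧ ‖A‖ ≤ ‖M‖ + Real.sqrt (‖M‖ ^ 2 - 1) := by
  have hBAx : ∀ x : H, B (A x) = x := by
    intro x
    have := congrFun (congrArg (DFunLike.coe) hBA) x
    simpa using this
  have key : ∀ x : H, ‖A x‖ ^ 2 + ‖x‖ ^ 2 ≤ 2 * ‖M‖ * ‖x‖ * ‖A x‖ := by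
    intro x
    have h1 : ((2 : ℂ) • M) x = A x + adjoint B x := by
      rw [hM]
      simp [smul_smul]
    have h2 : ⟪((2 : ℂ) • M) x, A x⟫_ℂ = ((‖A x‖ : ℂ) ^ 2) + ((‖x‖ : ℂ) ^ 2) := by
      rw [h1, inner_add_left, adjoint_inner_left, hBAx,
        inner_self_eq_norm_sq_to_K, inner_self_eq_norm_sq_to_K]
      norm_cast
    have hre : ‖A x‖ ^ 2 + ‖x‖ ^ 2 = (⟪((2 : ℂ) • M) x, A x⟫_ℂ).re := by
      rw [h2]; norm_cast
    calc ‖A x‖ ^ 2 + ‖x‖ ^ 2 = (⟪((2 : ℂ) • M) x, A x⟫_ℂ).re := hre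
    _ ≤ ‖⟪((2 : ℂ) • M) x, A x⟫_ℂ‖ := Complex.re_le_norm _
    _ ≤ ‖((2 : ℂ) • M) x‖ * ‖A x‖ := norm_inner_le_norm _ _
    _ ≤ (‖(2 : ℂ) • M‖ * ‖x‖) * ‖A x‖ := by
        gcongr
        exact le_opNorm _ _
    _ = 2 * ‖M‖ * ‖x‖ * ‖A x‖ := by
        rw [norm_smul]
        simp [Complex.norm_ofNat]
  have hMnorm : 1 ≤ ‖M‖ := by
    obtain ⟨x, hx⟩ := exists_ne (0 : H)
    have hxpos : 0 < ‖x‖ := norm_pos_iff.mpr hx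
    have hAx : A x ≠ 0 := by
      intro h
      apply hx
      rw [← hBAx x, h, map_zero]
    have hAxpos : 0 < ‖A x‖ := norm_pos_iff.mpr hAx
    nlinarith [key x, sq_nonneg (‖A x‖ - ‖x‖), mul_pos hxpos hAxpos]
  refine ⟨hMnorm, ?_⟩
  have hs : Real.sqrt (‖M‖ ^ 2 - 1) ^ 2 = ‖M‖ ^ 2 - 1 :=
    Real.sq_sqrt (by nlinarith)
  have hsnn : 0 ≤ Real.sqrt (‖M‖ ^ 2 - 1) := Real.sqrt_nonneg _
  apply opNorm_le_bound
  · positivity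
  · intro x
    nlinarith [key x, norm_nonneg x, norm_nonneg (A x),
      sq_nonneg (‖A x‖ - ‖M‖ * ‖x‖ + Real.sqrt (‖M‖ ^ 2 - 1) * ‖x‖),
      mul_nonneg hsnn (norm_nonneg x)]
end

section
/- Fix a natural number k and set n = 8k + 4. Let E be the n×n matrix (with indices 1 ≤ i, j ≤ n) whose entries are e_{ij} = 1 if 3k + 2 ≤ |i − j| ≤ 5k + 2 and e_{ij} = 0 otherwise. Then E·e = (n/4)·e, where e = (1, 1, …, 1)ᵀ, and the operator norm of E (induced by the Euclidean norm on ℂⁿ) equals n/4. -/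
lemma indicator_card (k : ℕ) (i : ℤ) (h0 : 0 ≤ i) (h1 : i ≤ 8*k+3) :
    ((Finset.Icc (0:ℤ) (8*k+3)).filter
      (fun j => (3*k+2 : ℤ) ≤ |i - j| ∧ |i - j| ≤ 5*k+2)).card = 2*k+1 := by
  have hset : ((Finset.Icc (0:ℤ) (8*k+3)).filter
      (fun j => (3*k+2 : ℤ) ≤ |i - j| ∧ |i - j| ≤ 5*k+2))
      = Finset.Icc (max 0 (i - (5*k+2))) (min (8*k+3) (i - (3*k+2)))
        ∪ Finset.Icc (max 0 (i + (3*k+2))) (min (8*k+3) (i + (5*k+2))) := by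
    ext j
    simp only [Finset.mem_filter, Finset.mem_Icc, Finset.mem_union, le_abs, abs_le,
      le_max_iff, max_le_iff, le_min_iff, min_le_iff]
    omega
  have hdisj : Disjoint (Finset.Icc (max 0 (i - (5*k+2))) (min (8*k+3) (i - (3*k+2))))
      (Finset.Icc (max 0 (i + (3*k+2))) (min (8*k+3) (i + (5*k+2)))) := by
    rw [Finset.disjoint_left]
    intro a ha hb
    simp only [Finset.mem_Icc, le_max_iff, max_le_iff, le_min_iff, min_le_iff] at ha hb
    omega
  rw [hset, Finset.card_union_of_disjoint hdisj, Int.card_Icc, Int.card_Icc]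
  omega

lemma fin_card (k n : ℕ) (hn : n = 8*k+4) (i : Fin n) :
    (Finset.univ.filter (fun j : Fin n =>
      (3*k+2 : ℤ) ≤ |(i:ℤ) - (j:ℤ)| ∧ |(i:ℤ) - (j:ℤ)| ≤ 5*k+2)).card = 2*k+1 := by
  have hi0 : (0:ℤ) ≤ (i:ℤ) := by positivity
  have hi1 : (i:ℤ) ≤ 8*k+3 := by have := i.isLt; omega
  rw [← indicator_card k (i:ℤ) hi0 hi1]
  refine Finset.card_bij' (fun (j : Fin n) _ => (j : ℤ))
    (fun z hz => (⟨z.toNat, by simp only [Finset.mem_filter, Finset.mem_Icc] at hz; omega⟩ : Fin n))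
    ?_ ?_ ?_ ?_
  · intro a ha
    simp only [Finset.mem_filter, Finset.mem_Icc] at ha ⊢
    have := a.isLt
    exact ⟨⟨by positivity, by omega⟩, ha.2⟩
  · intro z hz
    simp only [Finset.mem_filter, Finset.mem_Icc, Finset.mem_univ, true_and] at hz ⊢
    have h0 : (0:ℤ) ≤ z := hz.1.1
    convert hz.2 using 3 <;> · simp; omega
  · intro a ha
    ext
    simp
  · intro z hz
    simp only [Finset.mem_filter, Finset.mem_Icc] at hz
    simp
    omega

/-- For `n = 8k + 4` and the 0-1 matrix `E` with `e_{ij} = 1` iff `3k+2 ≤ |i−j| ≤ 5k+2`,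
the all-ones vector is an eigenvector of `E` with eigenvalue `n/4`, and the operator
norm of `E` (induced by the Euclidean norm on `ℂⁿ`) equals `n/4`. -/
theorem matrix_E_norm (k : ℕ) (n : ℕ) (hn : n = 8 * k + 4)
    (E : Matrix (Fin n) (Fin n) ℂ)
    (hE : ∀ i j : Fin n, E i j =
      if 3 * k + 2 ≤ |(i : ℤ) - (j : ℤ)| ∧ |(i : ℤ) - (j : ℤ)| ≤ 5 * k + 2 then 1 else 0) :
    E.mulVec (fun _ => 1) = (fun _ => (n : ℂ) / 4) ∧
    ‖Matrix.toEuclideanCLM (𝕜 := ℂ) E‖ = (n : ℝ) / 4 := by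
  classical
  have hn4 : n = 8*k+4 := by omega
  -- the indicator as a real matrix
  set P : Fin n → Fin n → Prop := fun i j =>
    3 * k + 2 ≤ |(i : ℤ) - (j : ℤ)| ∧ |(i : ℤ) - (j : ℤ)| ≤ 5 * k + 2 with hPdef
  have hcard : ∀ i : Fin n, (Finset.univ.filter (P i)).card = 2*k+1 := by
    intro i
    exact fin_card k n hn4 i
  set b : Fin n → Fin n → ℝ := fun i j => if P i j then 1 else 0 with hbdef
  have hbb : ∀ i j, b i j ^ 2 = b i j := by
    intro i j; simp only [hbdef]; split <;> norm_num
  have hrow : ∀ i, ∑ j, b i j = ((2*k+1 : ℕ) : ℝ) := by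
    intro i
    rw [hbdef]
    rw [Finset.sum_boole, hcard i]
  have hsym : ∀ i j, b i j = b j i := by
    intro i j
    simp only [hbdef, hPdef]
    rw [abs_sub_comm]
  have hcol : ∀ j, ∑ i, b i j = ((2*k+1 : ℕ) : ℝ) := by
    intro j
    rw [Finset.sum_congr rfl fun i _ => hsym i j, hrow j]
  have hEb : ∀ i j, ‖E i j‖ = b i j := by
    intro i j
    rw [hE]
    simp only [hbdef]
    split <;> simp
  have hrowC : ∀ i, ∑ j, E i j = ((2*k+1 : ℕ) : ℂ) := by
    intro i
    simp_rw [hE]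
    rw [Finset.sum_boole, hcard i]
  set T := Matrix.toEuclideanCLM (𝕜 := ℂ) E with hT
  have happ : ∀ (x : EuclideanSpace ℂ (Fin n)) (i : Fin n), (T x) i = ∑ j, E i j * x j :=
    fun _ _ => rfl
  have hx2 : ∀ v : EuclideanSpace ℂ (Fin n), ‖v‖ = Real.sqrt (∑ i, ‖v i‖^2) :=
    fun v => EuclideanSpace.norm_eq v
  have hc0 : (0:ℝ) ≤ ((2*k+1:ℕ):ℝ) := by positivity
  constructor
  · funext i
    have h1 : (E.mulVec fun _ => 1) i = ∑ j, E i j := by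
      simp [Matrix.mulVec, dotProduct]
    rw [h1, hrowC i, hn]
    push_cast
    ring
  · have hub : ‖T‖ ≤ ((2*k+1:ℕ):ℝ) := by
      refine ContinuousLinearMap.opNorm_le_bound _ hc0 (fun x => ?_)
      have key : ∑ i, ‖(T x) i‖^2 ≤ ((2*k+1:ℕ):ℝ)^2 * ∑ j, ‖x j‖^2 := by
        have step1 : ∀ i, ‖(T x) i‖^2 ≤ ((2*k+1:ℕ):ℝ) * ∑ j, b i j * ‖x j‖^2 := by
          intro i
          have hA : ‖(T x) i‖ ≤ ∑ j, b i j * ‖x j‖ := by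
            rw [happ]
            refine (norm_sum_le _ _).trans_eq (Finset.sum_congr rfl fun j _ => ?_)
            rw [norm_mul, hEb]
          calc ‖(T x) i‖^2 ≤ (∑ j, b i j * ‖x j‖)^2 := by
                have h0 : (0:ℝ) ≤ ∑ j, b i j * ‖x j‖ :=
                  (norm_nonneg _).trans hA
                exact pow_le_pow_left₀ (norm_nonneg _) hA 2
            _ = (∑ j, b i j * (b i j * ‖x j‖))^2 := by
                congr 1
                refine Finset.sum_congr rfl fun j _ => ?_
                rw [← mul_assoc]
                have : b i j * b i j = b i j := by
                  have := hbb i j; nlinarith [hbb i j]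
                rw [this]
            _ ≤ (∑ j, b i j ^ 2) * ∑ j, (b i j * ‖x j‖)^2 :=
                Finset.sum_mul_sq_le_sq_mul_sq _ _ _
            _ = ((2*k+1:ℕ):ℝ) * ∑ j, b i j * ‖x j‖^2 := by
                congr 1
                · rw [Finset.sum_congr rfl fun j _ => hbb i j, hrow i]
                · refine Finset.sum_congr rfl fun j _ => ?_
                  rw [mul_pow, hbb]
        calc ∑ i, ‖(T x) i‖^2 ≤ ∑ i, ((2*k+1:ℕ):ℝ) * ∑ j, b i j * ‖x j‖^2 :=
              Finset.sum_le_sum fun i _ => step1 i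
          _ = ((2*k+1:ℕ):ℝ) * ∑ j, (∑ i, b i j) * ‖x j‖^2 := by
              rw [← Finset.mul_sum]
              congr 1
              rw [Finset.sum_comm]
              exact Finset.sum_congr rfl fun j _ => (Finset.sum_mul _ _ _).symm
          _ = ((2*k+1:ℕ):ℝ)^2 * ∑ j, ‖x j‖^2 := by
              simp_rw [hcol]
              rw [← Finset.mul_sum]
              ring
      calc ‖T x‖ = Real.sqrt (∑ i, ‖(T x) i‖^2) := hx2 _
        _ ≤ Real.sqrt (((2*k+1:ℕ):ℝ)^2 * ∑ j, ‖x j‖^2) := Real.sqrt_le_sqrt key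
        _ = ((2*k+1:ℕ):ℝ) * ‖x‖ := by
            rw [Real.sqrt_mul (by positivity), Real.sqrt_sq hc0, hx2 x]
    have hnpos : 0 < n := by omega
    set e1 : EuclideanSpace ℂ (Fin n) := (WithLp.equiv 2 (Fin n → ℂ)).symm (fun _ => 1) with he1def
    have he1 : ∀ j, e1 j = 1 := fun _ => rfl
    have hTe1 : ∀ i, (T e1) i = ((2*k+1:ℕ):ℂ) := by
      intro i
      rw [happ]
      simp_rw [he1, mul_one]
      exact hrowC i
    have hne1 : ‖e1‖ = Real.sqrt n := by
      rw [hx2]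
      simp [he1]
    have hnTe1 : ‖T e1‖ = ((2*k+1:ℕ):ℝ) * Real.sqrt n := by
      rw [hx2]
      simp_rw [hTe1]
      rw [Finset.sum_const, Finset.card_univ, Fintype.card_fin]
      rw [nsmul_eq_mul]
      rw [Real.sqrt_mul (by positivity)]
      rw [show ‖((2*k+1:ℕ):ℂ)‖^2 = (((2*k+1:ℕ):ℝ))^2 by
        rw [Complex.norm_natCast]]
      rw [Real.sqrt_sq hc0]
      ring
    have hsq : 0 < Real.sqrt n := Real.sqrt_pos.mpr (by positivity)
    have hlb : ((2*k+1:ℕ):ℝ) ≤ ‖T‖ := by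
      have h := T.le_opNorm e1
      rw [hnTe1, hne1] at h
      exact le_of_mul_le_mul_right h hsq
    have hq : (n:ℝ)/4 = ((2*k+1:ℕ):ℝ) := by
      rw [hn]; push_cast; ring
    rw [hq]
    exact le_antisymm hub hlb
end

section
/- Fix a natural number k and set n = 8k + 4. Let E be the n×n matrix with entries e_{ij} = 1 if 3k + 2 ≤ |i − j| ≤ 5k + 2 and e_{ij} = 0 otherwise, and let B = I + E/(2n^{3/2}). Then the operator norm of B (induced by the Euclidean norm on ℂⁿ) equals 1 + 1/(8√n). -/
open Finset in
lemma count_lemma (k n : ℕ) (hn : n = 8*k+4) (i : Fin n) :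
    (univ.filter (fun j : Fin n =>
      3*(k:ℤ)+2 ≤ |(i:ℤ)-(j:ℤ)| ∧ |(i:ℤ)-(j:ℤ)| ≤ 5*(k:ℤ)+2)).card = 2*k+1 := by
  have hn0 : 0 < n := by omega
  have : NeZero n := ⟨by omega⟩
  have key : ∀ d : Fin n,
      ((3*(k:ℤ)+2 ≤ |(i:ℤ)-((d+i : Fin n):ℤ)| ∧ |(i:ℤ)-((d+i : Fin n):ℤ)| ≤ 5*(k:ℤ)+2)
        ↔ (3*k+2 ≤ (d:ℕ) ∧ (d:ℕ) ≤ 5*k+2)) := by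
    intro d
    have hd := d.isLt
    have hi := i.isLt
    have hv : ((d+i : Fin n) : ℕ) = ((d:ℕ)+(i:ℕ)) % n := Fin.val_add d i
    have hv' : ((d+i : Fin n) : ℤ) = ((((d:ℕ)+(i:ℕ)) % n : ℕ) : ℤ) := by rw [hv]
    rw [hv']
    rcases lt_or_ge ((d:ℕ)+(i:ℕ)) n with h | h
    · rw [Nat.mod_eq_of_lt h]
      simp only [le_abs, abs_le]
      omega
    · have : ((d:ℕ)+(i:ℕ)) % n = (d:ℕ)+(i:ℕ) - n := by
        rw [Nat.mod_eq_sub_mod h, Nat.mod_eq_of_lt (by omega)]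
      rw [this]
      simp only [le_abs, abs_le]
      omega
  have hbij : (univ.filter (fun j : Fin n =>
      3*(k:ℤ)+2 ≤ |(i:ℤ)-(j:ℤ)| ∧ |(i:ℤ)-(j:ℤ)| ≤ 5*(k:ℤ)+2)).card
      = (univ.filter (fun d : Fin n => 3*k+2 ≤ (d:ℕ) ∧ (d:ℕ) ≤ 5*k+2)).card := by
    apply Finset.card_bij (fun j _ => j - i)
    · intro j hj
      simp only [mem_filter, mem_univ, true_and] at hj ⊢
      rw [← key (j - i)]
      simpa using hj
    · intro a ha b hb hab
      have := congrArg (· + i) hab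
      simpa using this
    · intro d hd
      refine ⟨d + i, ?_, by simp⟩
      simp only [mem_filter, mem_univ, true_and] at hd ⊢
      exact (key d).mpr hd
  rw [hbij]
  have : (univ.filter (fun d : Fin n => 3*k+2 ≤ (d:ℕ) ∧ (d:ℕ) ≤ 5*k+2)).card
      = (Finset.Icc (3*k+2) (5*k+2)).card := by
    apply Finset.card_bij (fun (d : Fin n) _ => (d : ℕ))
    · intro a ha; simp only [mem_filter, mem_univ, true_and] at ha
      simp only [Finset.mem_Icc]; omega
    · intro a _ b _ h; exact Fin.ext h
    · intro m hm; simp only [Finset.mem_Icc] at hm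
      exact ⟨⟨m, by omega⟩, by simp only [mem_filter, mem_univ, true_and]; omega, rfl⟩
  rw [this, Nat.card_Icc]; omega

set_option maxHeartbeats 1000000 in
set_option synthInstance.maxHeartbeats 400000 in
open Finset in
/-- For `n = 8k + 4`, the 0-1 matrix `E` with `e_{ij} = 1` iff `3k+2 ≤ |i−j| ≤ 5k+2`,
and `B = I + E/(2n^{3/2})`, the operator norm of `B` (induced by the Euclidean norm on
`ℂⁿ`) equals `1 + 1/(8√n)`. -/
theorem matrix_B_norm (k : ℕ) (n : ℕ) (hn : n = 8 * k + 4)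
    (E : Matrix (Fin n) (Fin n) ℂ)
    (hE : ∀ i j : Fin n, E i j =
      if 3 * k + 2 ≤ |(i : ℤ) - (j : ℤ)| ∧ |(i : ℤ) - (j : ℤ)| ≤ 5 * k + 2 then 1 else 0)
    (B : Matrix (Fin n) (Fin n) ℂ)
    (hB : B = 1 + (((2 * (n : ℝ) ^ ((3 : ℝ) / 2))⁻¹ : ℝ) : ℂ) • E) :
    ‖Matrix.toEuclideanCLM (𝕜 := ℂ) B‖ = 1 + 1 / (8 * Real.sqrt n) := by
  classical
  have hn0 : 0 < n := by omega
  have : NeZero n := ⟨by omega⟩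
  set c : ℝ := (2 * (n : ℝ) ^ ((3 : ℝ) / 2))⁻¹ with hc
  have hnpos : (0:ℝ) < n := by exact_mod_cast hn0
  have hcpos : 0 < c := by
    rw [hc]
    positivity
  -- real version of E's entries
  set g : Fin n → Fin n → ℝ := fun i j =>
    if 3 * (k:ℤ) + 2 ≤ |(i : ℤ) - (j : ℤ)| ∧ |(i : ℤ) - (j : ℤ)| ≤ 5 * (k:ℤ) + 2 then 1 else 0
    with hg
  have hEg : ∀ i j, E i j = ((g i j : ℝ) : ℂ) := by
    intro i j
    rw [hE, hg]
    push_cast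
    split <;> simp
  have hg01 : ∀ i j, g i j = 0 ∨ g i j = 1 := by
    intro i j; simp only [hg]; split <;> simp
  have hgnn : ∀ i j, 0 ≤ g i j := by
    intro i j; rcases hg01 i j with h | h <;> rw [h] <;> norm_num
  have hgsym : ∀ i j, g i j = g j i := by
    intro i j; rw [hg]; simp only; rw [abs_sub_comm]
  have hrow : ∀ i, ∑ j, g i j = (2*k+1 : ℝ) := by
    intro i
    rw [hg]
    rw [Finset.sum_boole]
    rw [count_lemma k n hn i]
    push_cast; ring
  have hcol : ∀ j, ∑ i, g i j = (2*k+1 : ℝ) := by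
    intro j
    calc ∑ i, g i j = ∑ i, g j i := by simp_rw [hgsym]
    _ = (2*k+1:ℝ) := hrow j
  -- coordinates of images
  have happ : ∀ (A : Matrix (Fin n) (Fin n) ℂ) (x : EuclideanSpace ℂ (Fin n)) (i : Fin n),
      Matrix.toEuclideanCLM (𝕜 := ℂ) A x i = ∑ j, A i j * x j := fun _ _ _ => rfl
  -- norm bound for E
  set T := Matrix.toEuclideanCLM (𝕜 := ℂ) E with hT
  have hTnorm : ‖T‖ ≤ (2*k+1 : ℝ) := by
    apply ContinuousLinearMap.opNorm_le_bound _ (by positivity)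
    intro x
    have hsq : ‖T x‖^2 ≤ ((2*k+1 : ℝ) * ‖x‖)^2 := by
      have h1 : ‖T x‖^2 = ∑ i, ‖T x i‖^2 := by
        rw [EuclideanSpace.norm_eq, Real.sq_sqrt (by positivity)]
      have h2 : ‖x‖^2 = ∑ j, ‖x j‖^2 := by
        rw [EuclideanSpace.norm_eq, Real.sq_sqrt (by positivity)]
      rw [h1, mul_pow, h2]
      have key : ∀ i, ‖T x i‖^2 ≤ (2*k+1 : ℝ) * ∑ j, g i j * ‖x j‖^2 := by
        intro i
        have e1 : ‖T x i‖ ≤ ∑ j, g i j * ‖x j‖ := by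
          rw [happ]
          refine (norm_sum_le _ _).trans (le_of_eq ?_)
          apply Finset.sum_congr rfl
          intro j _
          rw [hEg, norm_mul, Complex.norm_real, Real.norm_eq_abs, abs_of_nonneg (hgnn i j)]
        have e2a : (∑ j, g i j * ‖x j‖) = ∑ j, g i j * (g i j * ‖x j‖) := by
          apply Finset.sum_congr rfl
          intro j _
          rcases hg01 i j with h | h <;> rw [h] <;> ring
        have e2 : (∑ j, g i j * ‖x j‖)^2 ≤ (∑ j, g i j ^2) * (∑ j, (g i j * ‖x j‖)^2) := by
          rw [e2a]
          exact Finset.sum_mul_sq_le_sq_mul_sq univ (g i) (fun j => g i j * ‖x j‖)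
        have e3 : (∑ j, g i j ^2) = (2*k+1 : ℝ) := by
          rw [← hrow i]
          apply Finset.sum_congr rfl
          intro j _
          rcases hg01 i j with h | h <;> rw [h] <;> ring
        have e4 : (∑ j, (g i j * ‖x j‖)^2) = ∑ j, g i j * ‖x j‖^2 := by
          apply Finset.sum_congr rfl
          intro j _
          rcases hg01 i j with h | h <;> rw [h] <;> ring
        calc ‖T x i‖^2 ≤ (∑ j, g i j * ‖x j‖)^2 := by
              apply pow_le_pow_left₀ (norm_nonneg _) e1
          _ ≤ (∑ j, g i j ^2) * (∑ j, (g i j * ‖x j‖)^2) := e2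
          _ = (2*k+1 : ℝ) * ∑ j, g i j * ‖x j‖^2 := by rw [e3, e4]
      calc ∑ i, ‖T x i‖^2 ≤ ∑ i, (2*k+1 : ℝ) * ∑ j, g i j * ‖x j‖^2 :=
            Finset.sum_le_sum (fun i _ => key i)
        _ = (2*k+1:ℝ) * ∑ j, (∑ i, g i j) * ‖x j‖^2 := by
            rw [← Finset.mul_sum, Finset.sum_comm]
            congr 1
            apply Finset.sum_congr rfl
            intro j _
            rw [Finset.sum_mul]
        _ = (2*k+1:ℝ)^2 * ∑ j, ‖x j‖^2 := by
            simp_rw [hcol]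
            rw [← Finset.mul_sum]
            ring
    have := Real.sqrt_le_sqrt hsq
    rwa [Real.sqrt_sq (norm_nonneg _), Real.sqrt_sq (by positivity)] at this
  -- decompose B
  have hBdec : Matrix.toEuclideanCLM (𝕜 := ℂ) B = 1 + (c : ℂ) • T := by
    rw [hB, map_add, map_one, map_smul, hT]
  -- upper bound
  have hupper : ‖Matrix.toEuclideanCLM (𝕜 := ℂ) B‖ ≤ 1 + c * (2*k+1 : ℝ) := by
    rw [hBdec]
    calc ‖(1 : EuclideanSpace ℂ (Fin n) →L[ℂ] EuclideanSpace ℂ (Fin n)) + (c:ℂ) • T‖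
        ≤ ‖(1 : EuclideanSpace ℂ (Fin n) →L[ℂ] EuclideanSpace ℂ (Fin n))‖ + ‖(c:ℂ) • T‖ :=
          norm_add_le _ _
      _ ≤ 1 + c * (2*k+1:ℝ) := by
          gcongr
          · exact ContinuousLinearMap.norm_id_le
          · refine (norm_smul_le ((c : ℂ)) T).trans ?_
            rw [Complex.norm_real, Real.norm_eq_abs, abs_of_pos hcpos]
            exact mul_le_mul_of_nonneg_left hTnorm hcpos.le
  -- lower bound via all-ones vector
  set v : EuclideanSpace ℂ (Fin n) := WithLp.toLp 2 (fun _ => (1:ℂ)) with hv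
  have hvnorm : ‖v‖ = Real.sqrt n := by
    rw [EuclideanSpace.norm_eq]
    simp [hv]
  have hvpos : 0 < ‖v‖ := by rw [hvnorm]; positivity
  have hBv : Matrix.toEuclideanCLM (𝕜 := ℂ) B v = ((1 + c * (2*k+1:ℝ) : ℝ) : ℂ) • v := by
    ext i
    rw [happ]
    have : ∀ j : Fin n, B i j * v j = B i j := fun j => mul_one _
    simp_rw [this]
    rw [hB]
    simp only [Matrix.add_apply, Matrix.smul_apply, Finset.sum_add_distrib]
    have h1 : ∑ j, (1 : Matrix (Fin n) (Fin n) ℂ) i j = 1 := by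
      simp [Matrix.one_apply]
    have h2 : ∑ j, ((c:ℂ)) • E i j = (c:ℂ) * (2*k+1:ℝ) := by
      rw [← Finset.smul_sum]
      have : ∑ j, E i j = ((2*k+1:ℝ) : ℂ) := by
        simp_rw [hEg]
        rw [← Complex.ofReal_sum, hrow i]
      rw [this, smul_eq_mul]
    rw [h1, h2]
    have hvi : v i = 1 := rfl
    rw [PiLp.smul_apply, hvi, smul_eq_mul, mul_one]
    push_cast
    ring
  have hlower : 1 + c * (2*k+1 : ℝ) ≤ ‖Matrix.toEuclideanCLM (𝕜 := ℂ) B‖ := by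
    have h1 : ‖Matrix.toEuclideanCLM (𝕜 := ℂ) B v‖ ≤ ‖Matrix.toEuclideanCLM (𝕜 := ℂ) B‖ * ‖v‖ :=
      ContinuousLinearMap.le_opNorm _ _
    rw [hBv, norm_smul, Complex.norm_real, Real.norm_eq_abs,
      abs_of_pos (by positivity)] at h1
    exact le_of_mul_le_mul_right h1 hvpos
  have hval : ‖Matrix.toEuclideanCLM (𝕜 := ℂ) B‖ = 1 + c * (2*k+1 : ℝ) :=
    le_antisymm hupper hlower
  rw [hval, hc]
  -- arithmetic
  have hsqrt : Real.sqrt n > 0 := Real.sqrt_pos.mpr hnpos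
  have h32 : (n:ℝ) ^ ((3:ℝ)/2) = n * Real.sqrt n := by
    rw [show (3:ℝ)/2 = 1 + 1/2 by norm_num, Real.rpow_add hnpos, Real.rpow_one,
      ← Real.sqrt_eq_rpow]
  rw [h32]
  have hsq : Real.sqrt n * Real.sqrt n = n := Real.mul_self_sqrt hnpos.le
  have hnk : (n:ℝ) = 8*k+4 := by exact_mod_cast congrArg (Nat.cast : ℕ → ℝ) hn
  field_simp
  nlinarith [hsq, hnk, hsqrt]
end

section
/- Fix a natural number k and set n = 8k + 4. Let E be the n×n matrix with entries e_{ij} = 1 if 3k + 2 ≤ |i − j| ≤ 5k + 2 and e_{ij} = 0 otherwise, B = I + E/(2n^{3/2}), D = diag(e^{iπ/2n}, e^{3iπ/2n}, …, e^{(2n−1)iπ/2n}), and A = DBD. Let P be the n×n permutation matrix with p_{ij} = 1 if i ≡ j + 1 (mod n) and p_{ij} = 0 otherwise, and let Δ = diag(1, …, 1, −1). Then PΔ is unitary and (PΔ)⁻¹ A (PΔ) = e^{2iπ/n} A. -/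
open Real Matrix

/-- For `n = 8k + 4` and `A = DBD` as in the paper, with `P` the cyclic permutation
matrix (`p_{ij} = 1` iff `i ≡ j + 1 (mod n)`) and `Δ = diag(1, …, 1, −1)`, the matrix
`PΔ` is unitary and `(PΔ)⁻¹ A (PΔ) = e^{2iπ/n} A`. -/
theorem matrix_A_rotation_symmetry (k : ℕ) (n : ℕ) (hn : n = 8 * k + 4)
    (E : Matrix (Fin n) (Fin n) ℂ)
    (hE : ∀ i j : Fin n, E i j =
      if 3 * k + 2 ≤ |(i : ℤ) - (j : ℤ)| ∧ |(i : ℤ) - (j : ℤ)| ≤ 5 * k + 2 then 1 else 0)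
    (B : Matrix (Fin n) (Fin n) ℂ)
    (hB : B = 1 + (((2 * (n : ℝ) ^ ((3 : ℝ) / 2))⁻¹ : ℝ) : ℂ) • E)
    (D : Matrix (Fin n) (Fin n) ℂ)
    (hD : D = Matrix.diagonal fun ℓ : Fin n =>
      Complex.exp ((2 * ((ℓ : ℕ) + 1) - 1) * π * Complex.I / (2 * n)))
    (A : Matrix (Fin n) (Fin n) ℂ) (hA : A = D * B * D)
    (P : Matrix (Fin n) (Fin n) ℂ)
    (hP : ∀ i j : Fin n, P i j = if ((i : ℕ) : ZMod n) = ((j : ℕ) : ZMod n) + 1 then 1 else 0)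
    (Δ : Matrix (Fin n) (Fin n) ℂ)
    (hΔ : Δ = Matrix.diagonal fun i : Fin n => if (i : ℕ) = n - 1 then (-1 : ℂ) else 1) :
    (P * Δ)ᴴ * (P * Δ) = 1 ∧ (P * Δ) * (P * Δ)ᴴ = 1 ∧
    (P * Δ)⁻¹ * A * (P * Δ) = Complex.exp (2 * π * Complex.I / n) • A := by
  have hn0 : 0 < n := by omega
  haveI : NeZero n := ⟨by omega⟩
  have hncC : (n : ℂ) ≠ 0 := by exact_mod_cast hn0.ne'
  set d : Fin n → ℂ := fun i => if (i : ℕ) = n - 1 then (-1 : ℂ) else 1 with hd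
  -- value of Fin addition by one
  have hmod1 : (1 : ℕ) % n = 1 := Nat.mod_eq_of_lt (by omega)
  have hvaladd : ∀ j : Fin n, ((j + 1 : Fin n) : ℕ) = ((j : ℕ) + 1) % n := by
    intro j; rw [Fin.val_add, Fin.val_one' n, hmod1]
  have hval : ∀ i : Fin n, ((i + 1 : Fin n) : ℕ) = if (i : ℕ) = n - 1 then 0 else (i : ℕ) + 1 := by
    intro i
    rw [hvaladd]
    split
    · next h => rw [show (i : ℕ) + 1 = n by omega, Nat.mod_self]
    · exact Nat.mod_eq_of_lt (by have := i.isLt; omega)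
  -- the permutation condition
  have hPcond : ∀ i j : Fin n,
      (((i : ℕ) : ZMod n) = ((j : ℕ) : ZMod n) + 1) ↔ i = j + 1 := by
    intro i j
    have h1 : ((j : ℕ) : ZMod n) + 1 = (((j : ℕ) + 1 : ℕ) : ZMod n) := by push_cast; ring
    rw [h1, ZMod.natCast_eq_natCast_iff, Nat.ModEq, Nat.mod_eq_of_lt i.isLt, ← hvaladd]
    exact Fin.ext_iff.symm
  -- closed form for P * Δ
  have hQ : ∀ i j : Fin n, (P * Δ) i j = if i = j + 1 then d j else 0 := by
    intro i j
    rw [hΔ, Matrix.mul_diagonal, hP]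
    simp only [hPcond i j]
    split <;> simp [hd]
  have hdconj : ∀ i : Fin n, star (d i) = d i := by
    intro i; simp only [hd]; split <;> simp
  have hdsq : ∀ i : Fin n, d i * d i = 1 := by
    intro i; simp only [hd]; split <;> norm_num
  -- unitarity
  have hleft : (P * Δ)ᴴ * (P * Δ) = 1 := by
    ext i j
    rw [Matrix.mul_apply, Finset.sum_eq_single (j + 1)
      (fun m _ hm => by rw [hQ, if_neg hm, mul_zero])
      (fun h => absurd (Finset.mem_univ _) h)]
    rw [Matrix.conjTranspose_apply, hQ, hQ, if_pos rfl, Matrix.one_apply]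
    by_cases hij : i = j
    · subst hij
      rw [if_pos rfl, if_pos rfl, hdconj, hdsq]
    · rw [if_neg (fun h => hij (add_right_cancel h).symm), if_neg hij, star_zero, zero_mul]
  refine ⟨hleft, mul_eq_one_comm.mp hleft, ?_⟩
  rw [Matrix.inv_eq_left_inv hleft]
  -- the exponential half-shift identity
  set dD : Fin n → ℂ := fun ℓ =>
    Complex.exp ((2 * (((ℓ : ℕ) : ℂ) + 1) - 1) * π * Complex.I / (2 * n)) with hdD
  have h1 : ∀ i : Fin n, d i * dD (i + 1) = Complex.exp (π * Complex.I / n) * dD i := by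
    intro i
    simp only [hdD, hd, hval]
    by_cases h : (i : ℕ) = n - 1
    · rw [if_pos h, if_pos h]
      rw [← Complex.exp_add]
      have hcast : (((n - 1 : ℕ)) : ℂ) = (n : ℂ) - 1 := by
        push_cast [Nat.cast_sub (by omega : 1 ≤ n)]; ring
      rw [show ((i : ℕ) : ℂ) = (n : ℂ) - 1 by rw [h, hcast]]
      rw [show π * Complex.I / n + (2 * ((n : ℂ) - 1 + 1) - 1) * π * Complex.I / (2 * n)
          = (2 * (((0 : ℕ) : ℂ) + 1) - 1) * π * Complex.I / (2 * n) + π * Complex.I by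
        field_simp; ring]
      rw [Complex.exp_add, Complex.exp_pi_mul_I]
      push_cast
      ring
    · rw [if_neg h, if_neg h, one_mul, ← Complex.exp_add]
      congr 1
      push_cast
      field_simp
      ring
  -- E is invariant under the cyclic shift
  have h2 : ∀ i j : Fin n, E (i + 1) (j + 1) = E i j := by
    intro i j
    rw [hE, hE]
    have := i.isLt; have := j.isLt
    congr 1
    simp only [Int.abs_eq_natAbs]
    rw [eq_iff_iff]
    have hvi := hval i; have hvj := hval j
    split at hvi <;> split at hvj <;> omega
  -- B is invariant under the cyclic shift
  have h3 : ∀ i j : Fin n, B (i + 1) (j + 1) = B i j := by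
    intro i j
    rw [hB]
    simp only [Matrix.add_apply, Matrix.one_apply, Matrix.smul_apply, h2, add_left_inj]
  -- main computation
  ext i j
  rw [Matrix.mul_apply, Finset.sum_eq_single (j + 1)
    (fun q _ hq => by rw [hQ, if_neg hq, mul_zero])
    (fun h => absurd (Finset.mem_univ _) h)]
  rw [hQ, if_pos rfl, Matrix.mul_apply, Finset.sum_eq_single (i + 1)
    (fun m _ hm => by rw [Matrix.conjTranspose_apply, hQ, if_neg hm, star_zero, zero_mul])
    (fun h => absurd (Finset.mem_univ _) h)]
  rw [Matrix.conjTranspose_apply, hQ, if_pos rfl, hdconj, Matrix.smul_apply, smul_eq_mul,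
    hA, hD, Matrix.mul_diagonal, Matrix.mul_diagonal, Matrix.diagonal_mul, Matrix.diagonal_mul,
    h3 i j]
  have hω : Complex.exp (2 * π * Complex.I / n)
      = Complex.exp (π * Complex.I / n) * Complex.exp (π * Complex.I / n) := by
    rw [← Complex.exp_add]; congr 1; ring
  rw [hω]
  linear_combination (B i j * dD (j + 1) * d j) * h1 i
    + (Complex.exp (π * Complex.I / n) * dD i * B i j) * h1 j
end

section
/- Let n ≥ 3 be a natural number and let z be a complex number such that Re(e^{2iπk/n} z) ≤ 1 for every integer k with 1 ≤ k ≤ n. Then |z| ≤ 1/cos(π/n). Consequently, if A is a bounded linear operator on a complex Hilbert space whose numerical range W(A) = {⟨Ah,h⟩ : ‖h‖ = 1} satisfies e^{2iπ/n}·W(A) = W(A) and Re⟨Ah,h⟩ ≤ 1 for all unit vectors h, then w(A) ≤ 1/cos(π/n). -/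
open Real
open scoped InnerProductSpace

universe u

/-- If `n ≥ 3` and `Re(e^{2iπk/n} z) ≤ 1` for `k = 1, …, n`, then `|z| ≤ 1/cos(π/n)`.
Consequently, an operator whose numerical range is invariant under rotation by `2π/n`
and lies in the half-plane `{Re z ≤ 1}` has numerical radius at most `1/cos(π/n)`. -/
theorem abs_le_inv_cos_of_rotations_re_le_one (n : ℕ) (hn : 3 ≤ n) :
    (∀ z : ℂ, (∀ k : ℕ, 1 ≤ k → k ≤ n →
        (Complex.exp (2 * π * Complex.I * k / n) * z).re ≤ 1) →
      ‖z‖ ≤ 1 / Real.cos (π / n)) ∧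
    (∀ (H : Type u) [NormedAddCommGroup H] [InnerProductSpace ℂ H] (A : H →L[ℂ] H),
      (fun z => Complex.exp (2 * π * Complex.I / n) * z) ''
          {z : ℂ | ∃ h : H, ‖h‖ = 1 ∧ z = ⟪h, A h⟫_ℂ} =
        {z : ℂ | ∃ h : H, ‖h‖ = 1 ∧ z = ⟪h, A h⟫_ℂ} →
      (∀ h : H, ‖h‖ = 1 → (⟪h, A h⟫_ℂ).re ≤ 1) →
      ∀ h : H, ‖h‖ = 1 → ‖(⟪h, A h⟫_ℂ)‖ ≤ 1 / Real.cos (π / n)) := by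
  have hn0 : (0:ℝ) < n := by exact_mod_cast lt_of_lt_of_le (by norm_num) hn
  have hnne : (n:ℝ) ≠ 0 := ne_of_gt hn0
  have hn3 : (3:ℝ) ≤ n := by exact_mod_cast hn
  have hπn_pos : 0 < π / n := div_pos Real.pi_pos hn0
  have hπn_lt : π / n < π / 2 := by
    apply div_lt_div_of_pos_left Real.pi_pos (by norm_num)
    linarith
  have hcos_pos : 0 < Real.cos (π / n) :=
    Real.cos_pos_of_mem_Ioo ⟨by linarith [Real.pi_div_two_pos], hπn_lt⟩
  have main : ∀ z : ℂ, (∀ k : ℕ, 1 ≤ k → k ≤ n →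
        (Complex.exp (2 * π * Complex.I * k / n) * z).re ≤ 1) →
      ‖z‖ ≤ 1 / Real.cos (π / n) := by
    intro z hz
    set θ := Complex.arg z with hθ
    set t : ℝ := -(n * θ) / (2 * π) with ht
    set k0 : ℤ := round t with hk0
    -- choose k ∈ [1, n] congruent to k0 mod n
    set j : ℤ := k0 % n with hj
    have hjn : j < n := Int.emod_lt_of_pos k0 (by exact_mod_cast lt_of_lt_of_le (by norm_num) hn)
    have hj0 : 0 ≤ j := Int.emod_nonneg k0 (by exact_mod_cast (by omega : n ≠ 0))
    set k : ℕ := if j = 0 then n else j.toNat with hk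
    have hk1 : 1 ≤ k := by
      rw [hk]; split
      · omega
      · omega
    have hk2 : k ≤ n := by
      rw [hk]; split
      · omega
      · omega
    obtain ⟨m, hm⟩ : ∃ m : ℤ, (k:ℤ) = k0 + n * m := by
      have hd := Int.emod_add_mul_ediv k0 (n:ℤ)
      rw [hk]; split_ifs with h0
      · refine ⟨1 - k0 / n, ?_⟩
        rw [hj] at h0
        linear_combination hd - h0
      · refine ⟨-(k0 / n), ?_⟩
        rw [Int.toNat_of_nonneg hj0, hj]
        linear_combination hd
    -- the real part formula
    have hre : ∀ a : ℝ, (Complex.exp ((a:ℂ) * Complex.I) * z).re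
        = ‖z‖ * Real.cos (θ + a) := by
      intro a
      conv_lhs => rw [← Complex.norm_mul_exp_arg_mul_I z]
      rw [mul_comm (Complex.exp _), mul_assoc, ← Complex.exp_add, ← hθ, ← add_mul,
        ← Complex.ofReal_add, Complex.re_ofReal_mul, Complex.exp_ofReal_mul_I_re]
    have hcast : (2 * ↑π * Complex.I * ↑k / ↑n : ℂ) = ((2*π*k/n : ℝ) : ℂ) * Complex.I := by
      push_cast; ring
    have hzk := hz k hk1 hk2
    rw [hcast, hre] at hzk
    -- rewrite the angle
    have hang : θ + 2*π*k/n = (θ + 2*π*k0/n) + m * (2*π) := by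
      have : (k:ℝ) = k0 + n * m := by exact_mod_cast hm
      field_simp [this]; linear_combination (2 * π) * this
    rw [hang, Real.cos_add_int_mul_two_pi] at hzk
    -- bound the angle
    have habs : |θ + 2*π*k0/n| ≤ π / n := by
      have h1 : |t - k0| ≤ 1/2 := abs_sub_round t
      have h2 : θ + 2*π*k0/n = (2*π/n) * (k0 - t) := by
        rw [ht]; field_simp; ring
      rw [h2, abs_mul, abs_sub_comm]
      have h3 : |2*π/n| = 2*π/n := abs_of_pos (by positivity)
      rw [h3]
      calc 2*π/n * |t - k0| ≤ 2*π/n * (1/2) := by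
            apply mul_le_mul_of_nonneg_left h1 (by positivity)
        _ = π / n := by ring
    have hcos : Real.cos (π / n) ≤ Real.cos (θ + 2*π*k0/n) := by
      rw [← Real.cos_abs (θ + 2*π*k0/n)]
      exact Real.cos_le_cos_of_nonneg_of_le_pi (abs_nonneg _)
        (by linarith [Real.pi_pos]) habs
    have : ‖z‖ * Real.cos (π / n) ≤ 1 :=
      le_trans (mul_le_mul_of_nonneg_left hcos (norm_nonneg z)) hzk
    rw [le_div_iff₀ hcos_pos]
    exact this
  refine ⟨main, ?_⟩
  intro H _ _ A hrot hre h hh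
  set W := {z : ℂ | ∃ h : H, ‖h‖ = 1 ∧ z = ⟪h, A h⟫_ℂ} with hW
  have hzW : (⟪h, A h⟫_ℂ) ∈ W := ⟨h, hh, rfl⟩
  have hpow : ∀ k : ℕ, (Complex.exp (2 * π * Complex.I / n))^k * ⟪h, A h⟫_ℂ ∈ W := by
    intro k
    induction k with
    | zero => simpa using hzW
    | succ k ih =>
        have : Complex.exp (2 * π * Complex.I / n) * ((Complex.exp (2 * π * Complex.I / n))^k * ⟪h, A h⟫_ℂ) ∈ W := by
          rw [← hrot]
          exact ⟨_, ih, rfl⟩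
        have heq : Complex.exp (2 * π * Complex.I / n) ^ (k+1) * ⟪h, A h⟫_ℂ
            = Complex.exp (2 * π * Complex.I / n)
              * (Complex.exp (2 * π * Complex.I / n) ^ k * ⟪h, A h⟫_ℂ) := by ring
        rw [heq]; exact this
  have key : ∀ k : ℕ, 1 ≤ k → k ≤ n →
      (Complex.exp (2 * π * Complex.I * k / n) * ⟪h, A h⟫_ℂ).re ≤ 1 := by
    intro k _ _
    have hexp : Complex.exp (2 * π * Complex.I * k / n)
        = (Complex.exp (2 * π * Complex.I / n))^k := by
      rw [← Complex.exp_nat_mul]; ring_nf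
    rw [hexp]
    obtain ⟨h', hh', heq⟩ := hpow k
    rw [heq]
    exact hre h' hh'
  have := main _ key
  simpa using this
end

section
/- Fix a natural number k and set n = 8k + 4. Let M be the n×n real matrix (indices 1 ≤ i, j ≤ n) with entries m_{ij} = (1/(2n^{3/2}))·cot((i − ½)π/n)·cot((j − ½)π/n) if 3k + 2 ≤ |i − j| ≤ 5k + 2, and m_{ij} = 0 otherwise. Then the squared Frobenius norm of M satisfies ∑_{i,j} |m_{ij}|² ≤ 9/32; in particular the operator norm of M is at most 3/4. -/
open Real

set_option maxHeartbeats 1000000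

lemma aux_cos_bound {α β : ℝ} (h1 : 3*π/8 ≤ |α - β|) (h2 : |α - β| ≤ 5*π/8) :
    |Real.cos (α - β)| ≤ 2/5 := by
  have hpi : π < 3.15 := Real.pi_lt_d2
  have hpi2 : 3.14 < π := Real.pi_gt_d6.trans_le' (by norm_num)
  rw [← Real.cos_abs]
  have hub : Real.cos |α - β| ≤ Real.cos (3*π/8) :=
    Real.cos_le_cos_of_nonneg_of_le_pi (by positivity) (by linarith) h1
  have hlb : Real.cos (5*π/8) ≤ Real.cos |α - β| :=
    Real.cos_le_cos_of_nonneg_of_le_pi (abs_nonneg _) (by linarith) h2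
  have e1 : Real.cos (3*π/8) = Real.sin (π/8) := by
    rw [← Real.cos_pi_div_two_sub]; ring_nf
  have e2 : Real.cos (5*π/8) = - Real.cos (3*π/8) := by
    rw [show (5*π/8 : ℝ) = π - 3*π/8 by ring, Real.cos_pi_sub]
  have hs : Real.sin (π/8) ≤ π/8 := Real.sin_le (by positivity)
  rw [abs_le]
  constructor <;> nlinarith


lemma aux_trig {α β : ℝ} (hα1 : 0 < α) (hα2 : α < π) (hβ1 : 0 < β) (hβ2 : β < π)
    (hc : |Real.cos (α - β)| ≤ 2/5) :
    (Real.cot α * Real.cot β)^2 ≤ 7/8 * ((Real.cot α)^2 + (Real.cot β)^2 + 2) := by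
  have hsa : 0 < Real.sin α := Real.sin_pos_of_pos_of_lt_pi hα1 hα2
  have hsb : 0 < Real.sin β := Real.sin_pos_of_pos_of_lt_pi hβ1 hβ2
  have hC : |Real.cos (α + β)| ≤ 1 := Real.abs_cos_le_one _
  have e1 : Real.cos α * Real.cos β * 2 = Real.cos (α - β) + Real.cos (α + β) := by
    rw [Real.cos_sub, Real.cos_add]; ring
  have pa := Real.sin_sq_add_cos_sq α
  have pb := Real.sin_sq_add_cos_sq β
  have e2 : Real.cos (α + β) * Real.cos (α - β) = 1 - Real.sin α^2 - Real.sin β^2 := by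
    rw [Real.cos_sub, Real.cos_add]; nlinarith
  rw [abs_le] at hc hC
  have key : (Real.cos α * Real.cos β)^2 ≤ 7/8 * (Real.sin α^2 + Real.sin β^2) := by
    nlinarith [mul_nonneg (by linarith : (0:ℝ) ≤ 2/5 - Real.cos (α-β))
        (by linarith : (0:ℝ) ≤ 1 + Real.cos (α+β)),
      mul_nonneg (by linarith : (0:ℝ) ≤ 2/5 + Real.cos (α-β))
        (by linarith : (0:ℝ) ≤ 1 - Real.cos (α+β)),
      mul_nonneg (by linarith : (0:ℝ) ≤ 2/5 - Real.cos (α-β))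
        (by linarith : (0:ℝ) ≤ 2/5 + Real.cos (α-β)),
      mul_nonneg (by linarith : (0:ℝ) ≤ 1 - Real.cos (α+β))
        (by linarith : (0:ℝ) ≤ 1 + Real.cos (α+β))]
  rw [Real.cot_eq_cos_div_sin, Real.cot_eq_cos_div_sin]
  rw [div_mul_div_comm, div_pow, div_pow, div_pow, div_le_iff₀ (by positivity)]
  have expand : (7/8 * ((Real.cos α^2/Real.sin α^2) + (Real.cos β^2/Real.sin β^2) + 2))
      * (Real.sin α * Real.sin β)^2 = 7/8 * (Real.sin α^2 + Real.sin β^2) := by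
    field_simp
    linear_combination (Real.sin β^2) * pa + (Real.sin α^2) * pb
  rw [expand]
  exact key


lemma aux_cot_sq_le {θ : ℝ} (h1 : 0 < θ) (h2 : θ ≤ π/2) :
    (Real.cot θ)^2 ≤ (1/θ)^2 := by
  have hs : 0 < Real.sin θ := Real.sin_pos_of_pos_of_lt_pi h1 (by linarith [Real.pi_pos])
  have hcos : 0 ≤ Real.cos θ := Real.cos_nonneg_of_mem_Icc ⟨by linarith, h2⟩
  have hts : θ * Real.cos θ ≤ Real.sin θ := by
    rcases lt_or_eq_of_le h2 with h | h
    · have := Real.lt_tan h1 h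
      rw [Real.tan_eq_sin_div_cos] at this
      have hc0 : 0 < Real.cos θ := Real.cos_pos_of_mem_Ioo ⟨by linarith, h⟩
      rw [lt_div_iff₀ hc0] at this
      linarith
    · simp [h, Real.cos_pi_div_two]
  have h0 : 0 ≤ Real.cot θ := by
    rw [Real.cot_eq_cos_div_sin]; positivity
  have hle : Real.cot θ ≤ 1/θ := by
    rw [Real.cot_eq_cos_div_sin, div_le_div_iff₀ hs h1]
    nlinarith
  nlinarith

lemma aux_cot_sq_pi_sub (x : ℝ) : (Real.cot (π - x))^2 = (Real.cot x)^2 := by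
  rw [Real.cot_eq_cos_div_sin, Real.cot_eq_cos_div_sin, Real.cos_pi_sub, Real.sin_pi_sub]
  ring

lemma aux_basel : ∀ m : ℕ, (∑ i ∈ Finset.range m, (1/((i:ℝ)+1/2))^2) ≤ 5 := by
  have key : ∀ m : ℕ, (∑ i ∈ Finset.range (m+1), (1/((i:ℝ)+1/2))^2) ≤ 5 - 1/((m:ℝ)+1) := by
    intro m
    induction m with
    | zero => norm_num
    | succ p ih =>
      rw [Finset.sum_range_succ]
      push_cast
      have h1 : (1/(((p:ℝ)+1)+1/2))^2 ≤ 1/(((p:ℝ)+1)*((p:ℝ)+2)) := by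
        rw [div_pow, one_pow, div_le_div_iff₀ (by positivity) (by positivity)]
        nlinarith [sq_nonneg ((p:ℝ)+1)]
      have h2 : (1:ℝ)/(((p:ℝ)+1)*((p:ℝ)+2)) = 1/((p:ℝ)+1) - 1/((p:ℝ)+2) := by
        field_simp; ring
      push_cast at ih
      calc _ ≤ (5 - 1/((p:ℝ)+1)) + (1/((p:ℝ)+1) - 1/((p:ℝ)+2)) := by
            rw [← h2]; linarith
        _ ≤ 5 - 1/((p:ℝ)+1+1) := by
            have : ((p:ℝ)+1+1) = (p:ℝ)+2 := by ring
            rw [this]; linarith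
  intro m
  cases m with
  | zero => simp
  | succ p =>
    refine (key p).trans ?_
    have : (0:ℝ) < (p:ℝ)+1 := by positivity
    have : (0:ℝ) ≤ 1/((p:ℝ)+1) := by positivity
    linarith



lemma aux_cot_sum (n : ℕ) (hn : 0 < n) :
    ∑ i ∈ Finset.range n, (Real.cot (((i:ℝ)+1/2)*π/n))^2 ≤ 10*(n:ℝ)^2/π^2 := by
  have hπ := Real.pi_pos
  have hnR : (0:ℝ) < n := by exact_mod_cast hn
  have hpt : ∀ i ∈ Finset.range n, (Real.cot (((i:ℝ)+1/2)*π/n))^2 ≤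
      ((n:ℝ)/π)^2 * ((1/((i:ℝ)+1/2))^2 + (1/(((n-1-i : ℕ):ℝ)+1/2))^2) := by
    intro i hi
    rw [Finset.mem_range] at hi
    have hcast : ((n-1-i : ℕ):ℝ) = (n:ℝ)-1-(i:ℝ) := by
      have : n - 1 - i = n - (1 + i) := by omega
      rw [this, Nat.cast_sub (by omega)]
      push_cast; ring
    have ht1 : (0:ℝ) < ((i:ℝ)+1/2)*π/n := by positivity
    rcases le_or_gt (2*i+1) n with hc | hc
    · -- θ ≤ π/2
      have h2 : ((i:ℝ)+1/2)*π/n ≤ π/2 := by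
        rw [div_le_div_iff₀ hnR (by norm_num : (0:ℝ) < 2)]
        have : (2*(i:ℝ)+1) ≤ (n:ℝ) := by exact_mod_cast hc
        nlinarith
      refine (aux_cot_sq_le ht1 h2).trans ?_
      have he : (1/(((i:ℝ)+1/2)*π/n))^2 = ((n:ℝ)/π)^2 * (1/((i:ℝ)+1/2))^2 := by
        field_simp
      rw [he]
      have : (0:ℝ) ≤ ((n:ℝ)/π)^2 * (1/(((n-1-i : ℕ):ℝ)+1/2))^2 := by positivity
      nlinarith [sq_nonneg ((n:ℝ)/π)]
    · -- θ > π/2, use π - θ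
      have hrw : ((i:ℝ)+1/2)*π/n = π - ((((n-1-i : ℕ):ℝ)+1/2)*π/n) := by
        rw [hcast]; field_simp; ring
      rw [hrw, aux_cot_sq_pi_sub]
      have ht1' : (0:ℝ) < (((n-1-i : ℕ):ℝ)+1/2)*π/n := by positivity
      have h2' : (((n-1-i : ℕ):ℝ)+1/2)*π/n ≤ π/2 := by
        rw [div_le_div_iff₀ hnR (by norm_num : (0:ℝ) < 2)]
        rw [hcast]
        have : (n:ℝ) < 2*(i:ℝ)+1 := by exact_mod_cast hc
        nlinarith
      refine (aux_cot_sq_le ht1' h2').trans ?_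
      have he : (1/((((n-1-i : ℕ):ℝ)+1/2)*π/n))^2
          = ((n:ℝ)/π)^2 * (1/(((n-1-i : ℕ):ℝ)+1/2))^2 := by
        field_simp
      rw [he]
      have : (0:ℝ) ≤ ((n:ℝ)/π)^2 * (1/((i:ℝ)+1/2))^2 := by positivity
      nlinarith
  refine (Finset.sum_le_sum hpt).trans ?_
  rw [← Finset.mul_sum]
  have hsplit : ∑ i ∈ Finset.range n, ((1/((i:ℝ)+1/2))^2 + (1/(((n-1-i : ℕ):ℝ)+1/2))^2)
      = (∑ i ∈ Finset.range n, (1/((i:ℝ)+1/2))^2)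
        + ∑ i ∈ Finset.range n, (1/(((n-1-i : ℕ):ℝ)+1/2))^2 := Finset.sum_add_distrib
  rw [hsplit]
  have hrefl : ∑ i ∈ Finset.range n, (1/(((n-1-i : ℕ):ℝ)+1/2))^2
      = ∑ i ∈ Finset.range n, (1/((i:ℝ)+1/2))^2 := by
    exact Finset.sum_range_reflect (fun j => (1/((j:ℝ)+1/2))^2) n
  rw [hrefl]
  have hb := aux_basel n
  calc ((n:ℝ)/π)^2 * (∑ i ∈ Finset.range n, (1/((i:ℝ)+1/2))^2 + ∑ i ∈ Finset.range n, (1/((i:ℝ)+1/2))^2)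
      ≤ ((n:ℝ)/π)^2 * (5 + 5) := by
        have h0 : (0:ℝ) ≤ ((n:ℝ)/π)^2 := sq_nonneg _
        nlinarith
    _ = 10*(n:ℝ)^2/π^2 := by rw [div_pow]; ring

lemma aux_count {k n : ℕ} {i : Fin n} (P : Fin n → Prop) [DecidablePred P]
    (hP : ∀ j, P j → 3*(k:ℤ)+2 ≤ |(i:ℤ)-(j:ℤ)| ∧ |(i:ℤ)-(j:ℤ)| ≤ 5*(k:ℤ)+2) :
    (Finset.univ.filter P).card ≤ 4*k+2 := by
  classical
  have hsub : (Finset.univ.filter P).card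
      ≤ (Finset.Icc (-(5*(k:ℤ)+2)) (-(3*(k:ℤ)+2)) ∪ Finset.Icc (3*(k:ℤ)+2) (5*(k:ℤ)+2)).card := by
    refine Finset.card_le_card_of_injOn (fun j => (i:ℤ) - (j:ℤ)) ?_ ?_
    · intro j hj
      simp only [Finset.mem_coe, Finset.mem_filter, Finset.mem_univ, true_and] at hj
      obtain ⟨h1, h2⟩ := hP j hj
      simp only [Finset.mem_coe, Finset.mem_union, Finset.mem_Icc]
      rcases abs_cases ((i:ℤ) - (j:ℤ)) with ⟨he, _⟩ | ⟨he, _⟩ <;> [right; left] <;> omega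
    · intro a _ b _ hab
      simp only at hab
      have : (a:ℤ) = (b:ℤ) := by omega
      exact Fin.ext (by exact_mod_cast this)
  refine hsub.trans ?_
  refine (Finset.card_union_le _ _).trans ?_
  rw [Int.card_Icc, Int.card_Icc]
  omega


lemma aux_opnorm {n : ℕ} (A : Matrix (Fin n) (Fin n) ℝ) (c : ℝ) (hc : 0 ≤ c)
    (h : ∑ i : Fin n, ∑ j : Fin n, |A i j|^2 ≤ c^2) :
    ‖Matrix.toEuclideanCLM (𝕜 := ℂ) (A.map Complex.ofReal)‖ ≤ c := by
  set A' : Matrix (Fin n) (Fin n) ℂ := A.map Complex.ofReal with hA'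
  apply ContinuousLinearMap.opNorm_le_bound _ hc
  intro x
  have hTx : ∀ i : Fin n, (Matrix.toEuclideanCLM (𝕜 := ℂ) A' x) i
      = ∑ j : Fin n, A' i j * x j := by
    intro i
    rfl
  have hnx : ‖x‖^2 = ∑ j : Fin n, ‖x j‖^2 := by
    rw [EuclideanSpace.norm_eq, Real.sq_sqrt (by positivity)]
  have hpt : ∀ i : Fin n, ‖(Matrix.toEuclideanCLM (𝕜 := ℂ) A' x) i‖^2
      ≤ (∑ j : Fin n, ‖A' i j‖^2) * (∑ j : Fin n, ‖x j‖^2) := by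
    intro i
    rw [hTx i]
    have h1 : ‖∑ j : Fin n, A' i j * x j‖ ≤ ∑ j : Fin n, ‖A' i j‖ * ‖x j‖ := by
      refine (norm_sum_le _ _).trans ?_
      exact Finset.sum_le_sum fun j _ => (norm_mul_le _ _)
    have h2 : (∑ j : Fin n, ‖A' i j‖ * ‖x j‖)^2
        ≤ (∑ j : Fin n, ‖A' i j‖^2) * (∑ j : Fin n, ‖x j‖^2) :=
      Finset.sum_mul_sq_le_sq_mul_sq _ _ _
    calc ‖∑ j : Fin n, A' i j * x j‖^2 ≤ (∑ j : Fin n, ‖A' i j‖ * ‖x j‖)^2 := by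
          have h0 : (0:ℝ) ≤ ‖∑ j : Fin n, A' i j * x j‖ := norm_nonneg _
          nlinarith
      _ ≤ _ := h2
  have hsq : ‖Matrix.toEuclideanCLM (𝕜 := ℂ) A' x‖^2 ≤ (c * ‖x‖)^2 := by
    rw [EuclideanSpace.norm_eq, Real.sq_sqrt (by positivity)]
    calc ∑ i : Fin n, ‖(Matrix.toEuclideanCLM (𝕜 := ℂ) A' x) i‖^2
        ≤ ∑ i : Fin n, (∑ j : Fin n, ‖A' i j‖^2) * (∑ j : Fin n, ‖x j‖^2) :=
          Finset.sum_le_sum fun i _ => hpt i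
      _ = (∑ i : Fin n, ∑ j : Fin n, ‖A' i j‖^2) * (∑ j : Fin n, ‖x j‖^2) := by
          rw [Finset.sum_mul]
      _ ≤ c^2 * ‖x‖^2 := by
          have he : ∀ i j : Fin n, ‖A' i j‖^2 = |A i j|^2 := by
            intro i j
            simp [hA', Matrix.map_apply, Complex.norm_real, Real.norm_eq_abs]
          simp_rw [he]
          rw [hnx]
          have hx0 : (0:ℝ) ≤ ∑ j : Fin n, ‖x j‖^2 := by positivity
          rw [← hnx]
          exact mul_le_mul_of_nonneg_right h (by rw [hnx]; exact hx0)
      _ = (c * ‖x‖)^2 := by ring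
  have h0 : (0:ℝ) ≤ ‖Matrix.toEuclideanCLM (𝕜 := ℂ) A' x‖ := norm_nonneg _
  have h1 : (0:ℝ) ≤ c * ‖x‖ := by positivity
  nlinarith



/-- For `n = 8k + 4`, the matrix `M` with entries
`m_{ij} = cot((i−½)π/n)·cot((j−½)π/n)/(2n^{3/2})` when `3k+2 ≤ |i−j| ≤ 5k+2` and `0`
otherwise has squared Frobenius norm at most `9/32`; in particular its operator norm
(induced by the Euclidean norm on `ℂⁿ`) is at most `3/4`. -/
theorem matrix_M_frobenius_bound (k : ℕ) (n : ℕ) (hn : n = 8 * k + 4)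
    (M : Matrix (Fin n) (Fin n) ℝ)
    (hM : ∀ i j : Fin n, M i j =
      if 3 * k + 2 ≤ |(i : ℤ) - (j : ℤ)| ∧ |(i : ℤ) - (j : ℤ)| ≤ 5 * k + 2 then
        (2 * (n : ℝ) ^ ((3 : ℝ) / 2))⁻¹ *
          Real.cot ((((i : ℕ) + 1 : ℝ) - 1 / 2) * π / n) *
          Real.cot ((((j : ℕ) + 1 : ℝ) - 1 / 2) * π / n)
      else 0) :
    (∑ i : Fin n, ∑ j : Fin n, |M i j| ^ 2) ≤ 9 / 32 ∧
    ‖Matrix.toEuclideanCLM (𝕜 := ℂ) (M.map Complex.ofReal)‖ ≤ 3 / 4 := by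
  classical
  have hπ := Real.pi_pos
  have hn4 : 4 ≤ n := by omega
  have hnR : (0:ℝ) < n := by
    have : (0:ℕ) < n := by omega
    exact_mod_cast this
  have hn4R : (4:ℝ) ≤ n := by exact_mod_cast hn4
  set θ : Fin n → ℝ := fun i => (((i : ℕ) + 1 : ℝ) - 1 / 2) * π / n with hθ
  set a : Fin n → ℝ := fun i => (Real.cot (θ i))^2 with ha
  set B : Fin n → Fin n → Prop := fun i j =>
    3 * k + 2 ≤ |(i : ℤ) - (j : ℤ)| ∧ |(i : ℤ) - (j : ℤ)| ≤ 5 * k + 2 with hB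
  have hθmem : ∀ i : Fin n, 0 < θ i ∧ θ i < π := by
    intro i
    have hi : ((i:ℕ):ℝ) < n := by exact_mod_cast i.isLt
    have hi0 : (0:ℝ) ≤ ((i:ℕ):ℝ) := by positivity
    constructor
    · have : (0:ℝ) < (((i : ℕ) + 1 : ℝ) - 1 / 2) := by linarith
      positivity
    · rw [hθ]
      rw [div_lt_iff₀ hnR]
      have hi1 : ((i:ℕ):ℝ)+1 ≤ n := by exact_mod_cast i.isLt
      nlinarith
  have h_rpow : ((n:ℝ) ^ ((3:ℝ)/2))^2 = (n:ℝ)^3 := by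
    rw [← Real.rpow_natCast ((n:ℝ)^((3:ℝ)/2)) 2, ← Real.rpow_mul (le_of_lt hnR)]
    norm_num
  have hapos : ∀ i : Fin n, 0 ≤ a i := fun i => sq_nonneg _
  -- entrywise bound
  have hentry : ∀ i j : Fin n, |M i j|^2 ≤
      7/(32*(n:ℝ)^3) * (if B i j then a i + a j + 2 else 0) := by
    intro i j
    rw [hM i j]
    by_cases hb : B i j
    · rw [if_pos hb, if_pos hb, sq_abs]
      have hdiff : θ i - θ j = (((i:ℤ) - (j:ℤ) : ℤ) : ℝ) * π / n := by
        rw [hθ]; push_cast; ring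
      have habs : |θ i - θ j| = ((|(i:ℤ) - (j:ℤ)| : ℤ) : ℝ) * π / n := by
        rw [hdiff, abs_div, abs_mul, abs_of_pos hπ, abs_of_pos hnR]
        norm_cast
      obtain ⟨hb1, hb2⟩ := hb
      have hd1R : ((3 * (k:ℤ) + 2 : ℤ) : ℝ) ≤ ((|(i:ℤ) - (j:ℤ)| : ℤ) : ℝ) := by
        exact_mod_cast hb1
      have hd2R : ((|(i:ℤ) - (j:ℤ)| : ℤ) : ℝ) ≤ ((5 * (k:ℤ) + 2 : ℤ) : ℝ) := by
        exact_mod_cast hb2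
      have hkR : ((k:ℤ) : ℝ) = (k:ℕ) := by push_cast; ring
      have hnk : (n:ℝ) = 8*(k:ℕ)+4 := by exact_mod_cast hn
      have h38 : 3*π/8 ≤ |θ i - θ j| := by
        rw [habs, div_le_div_iff₀ (by norm_num) hnR]
        push_cast at hd1R ⊢
        nlinarith
      have h58 : |θ i - θ j| ≤ 5*π/8 := by
        rw [habs, div_le_div_iff₀ hnR (by norm_num)]
        push_cast at hd2R ⊢
        nlinarith
      have hcos := aux_cos_bound h38 h58
      have htrig := aux_trig (hθmem i).1 (hθmem i).2 (hθmem j).1 (hθmem j).2 hcos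
      have he : ((2 * (n:ℝ) ^ ((3:ℝ)/2))⁻¹ * Real.cot (θ i) * Real.cot (θ j))^2
          = (Real.cot (θ i) * Real.cot (θ j))^2 * (4*(n:ℝ)^3)⁻¹ := by
        have h2 : ((2 * (n:ℝ) ^ ((3:ℝ)/2)))^2 = 4*(n:ℝ)^3 := by
          rw [mul_pow, h_rpow]; norm_num
        rw [← h2]
        ring
      rw [he]
      have h4n : (0:ℝ) < 4*(n:ℝ)^3 := by positivity
      rw [show 7/(32*(n:ℝ)^3) * (a i + a j + 2)
          = (7/8 * ((Real.cot (θ i))^2 + (Real.cot (θ j))^2 + 2)) * (4*(n:ℝ)^3)⁻¹ by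
        rw [ha]; field_simp; ring]
      exact mul_le_mul_of_nonneg_right htrig (by positivity)
    · rw [if_neg hb, if_neg hb]
      simp
  -- sum bound
  have hcard : ∀ i : Fin n, ((Finset.univ.filter (fun j : Fin n => B i j)).card : ℝ)
      ≤ 4*(k:ℝ)+2 := by
    intro i
    have hcc := aux_count (k := k) (i := i) (fun j : Fin n => B i j) (fun j hj => hj)
    have h2 : ((Finset.univ.filter (fun j : Fin n => B i j)).card : ℝ)
        ≤ ((4*k+2 : ℕ) : ℝ) := Nat.cast_le.mpr hcc
    push_cast at h2
    linarith
  have hcard' : ∀ j : Fin n, ((Finset.univ.filter (fun i : Fin n => B i j)).card : ℝ)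
      ≤ 4*(k:ℝ)+2 := by
    intro j
    have hcc := aux_count (k := k) (i := j) (fun i : Fin n => B i j)
      (fun i hi => by rw [hB] at hi; rw [abs_sub_comm]; exact hi)
    have h2 : ((Finset.univ.filter (fun i : Fin n => B i j)).card : ℝ)
        ≤ ((4*k+2 : ℕ) : ℝ) := Nat.cast_le.mpr hcc
    push_cast at h2
    linarith
  set A : ℝ := ∑ i : Fin n, a i with hA
  have hrow1 : ∀ i : Fin n, (∑ j : Fin n, if B i j then a i + 2 else 0)
      ≤ (4*(k:ℝ)+2) * (a i + 2) := by
    intro i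
    rw [← Finset.sum_filter]
    rw [Finset.sum_const, nsmul_eq_mul]
    exact mul_le_mul_of_nonneg_right (hcard i) (by nlinarith [hapos i])
  have hrow2 : ∀ j : Fin n, (∑ i : Fin n, if B i j then a j else 0)
      ≤ (4*(k:ℝ)+2) * (a j) := by
    intro j
    rw [← Finset.sum_filter]
    rw [Finset.sum_const, nsmul_eq_mul]
    exact mul_le_mul_of_nonneg_right (hcard' j) (hapos j)
  have hT : (∑ i : Fin n, ∑ j : Fin n, if B i j then a i + a j + 2 else 0)
      ≤ (4*(k:ℝ)+2) * (2*A + 2*n) := by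
    have hsplit : (∑ i : Fin n, ∑ j : Fin n, if B i j then a i + a j + 2 else 0)
        = (∑ i : Fin n, ∑ j : Fin n, if B i j then a i + 2 else 0)
          + (∑ i : Fin n, ∑ j : Fin n, if B i j then a j else 0) := by
      rw [← Finset.sum_add_distrib]
      apply Finset.sum_congr rfl
      intro i _
      rw [← Finset.sum_add_distrib]
      apply Finset.sum_congr rfl
      intro j _
      split_ifs <;> ring
    rw [hsplit]
    have h1 : (∑ i : Fin n, ∑ j : Fin n, if B i j then a i + 2 else 0)
        ≤ (4*(k:ℝ)+2) * (A + 2*n) := by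
      calc _ ≤ ∑ i : Fin n, (4*(k:ℝ)+2) * (a i + 2) :=
            Finset.sum_le_sum fun i _ => hrow1 i
        _ = (4*(k:ℝ)+2) * (A + 2*n) := by
            rw [← Finset.mul_sum, Finset.sum_add_distrib, Finset.sum_const,
              Finset.card_univ, Fintype.card_fin, nsmul_eq_mul, hA]
            ring
    have h2 : (∑ i : Fin n, ∑ j : Fin n, if B i j then a j else 0)
        ≤ (4*(k:ℝ)+2) * A := by
      rw [Finset.sum_comm]
      calc _ ≤ ∑ j : Fin n, (4*(k:ℝ)+2) * (a j) :=
            Finset.sum_le_sum fun j _ => hrow2 j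
        _ = (4*(k:ℝ)+2) * A := by rw [← Finset.mul_sum, hA]
    linarith
  have hAbound : A ≤ 10*(n:ℝ)^2/π^2 := by
    have hptw : ∀ i : Fin n, a i = (fun m : ℕ => (Real.cot (((m:ℝ)+1/2)*π/n))^2) (i:ℕ) := by
      intro i
      show (Real.cot (((((i:ℕ):ℝ) + 1) - 1/2)*π/(n:ℝ)))^2 = _
      have harg : ((((i:ℕ):ℝ) + 1) - 1/2)*π/(n:ℝ) = (((i:ℕ):ℝ)+1/2)*π/(n:ℝ) := by ring
      rw [harg]
    have heq : A = ∑ i ∈ Finset.range n, (Real.cot (((i:ℝ)+1/2)*π/n))^2 := by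
      rw [hA, Finset.sum_congr rfl (fun i _ => hptw i)]
      exact Fin.sum_univ_eq_sum_range (fun m : ℕ => (Real.cot (((m:ℝ)+1/2)*π/n))^2) n
    rw [heq]
    exact aux_cot_sum n (by omega)
  -- combine part 1
  have hpart1 : (∑ i : Fin n, ∑ j : Fin n, |M i j| ^ 2) ≤ 9 / 32 := by
    have hstep : (∑ i : Fin n, ∑ j : Fin n, |M i j| ^ 2)
        ≤ 7/(32*(n:ℝ)^3) * ∑ i : Fin n, ∑ j : Fin n, (if B i j then a i + a j + 2 else 0) := by
      rw [Finset.mul_sum]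
      refine Finset.sum_le_sum fun i _ => ?_
      rw [Finset.mul_sum]
      exact Finset.sum_le_sum fun j _ => hentry i j
    refine hstep.trans ?_
    have hc : 0 ≤ 7/(32*(n:ℝ)^3) := by positivity
    have hT' := mul_le_mul_of_nonneg_left hT hc
    refine hT'.trans ?_
    -- numeric: 7/(32 n^3) * (4k+2)(2A+2n) ≤ 9/32
    have hkn : 4*(k:ℝ)+2 = (n:ℝ)/2 := by
      have : (n:ℝ) = 8*(k:ℝ)+4 := by exact_mod_cast hn
      linarith
    rw [hkn]
    have hpi : (3.14:ℝ) < π := by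
      have := Real.pi_gt_d6
      linarith
    have hπ2 : (9.8:ℝ) < π^2 := by nlinarith
    have hA0 : 0 ≤ A := Finset.sum_nonneg fun i _ => hapos i
    -- 7/(32 n³) * (n/2) * (2A + 2n) = 7(A+n)/(32 n²) ≤ 7(10n²/π² + n)/(32 n²) ≤ 9/32
    have hfinal : 7/(32*(n:ℝ)^3) * ((n:ℝ)/2 * (2*A + 2*(n:ℝ))) ≤ 9/32 := by
      have he : 7/(32*(n:ℝ)^3) * ((n:ℝ)/2 * (2*A + 2*(n:ℝ))) = 7*(A+(n:ℝ))/(32*(n:ℝ)^2) := by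
        field_simp
      rw [he]
      rw [div_le_div_iff₀ (by positivity) (by norm_num : (0:ℝ) < 32)]
      -- 7(A+n)*32 ≤ 9*32 n²  i.e. 7(A+n) ≤ 9n²
      have hup : A + (n:ℝ) ≤ 10*(n:ℝ)^2/π^2 + (n:ℝ) := by linarith
      have h10 : 10*(n:ℝ)^2/π^2 ≤ 10*(n:ℝ)^2/9.8 := by
        apply div_le_div_of_nonneg_left (by positivity) (by norm_num) (le_of_lt hπ2)
      have hsq : (4:ℝ)*(n:ℝ) ≤ (n:ℝ)^2 := by nlinarith
      have h98 : 10*(n:ℝ)^2/9.8 = (50/49)*(n:ℝ)^2 := by ring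
      nlinarith [hsq, hup, h10]
    exact hfinal
  refine ⟨hpart1, ?_⟩
  apply aux_opnorm M (3/4) (by norm_num)
  calc ∑ i : Fin n, ∑ j : Fin n, |M i j|^2 ≤ 9/32 := hpart1
    _ ≤ (3/4)^2 := by norm_num
end
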